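/- arXiv:1509.08320 — 6 statements merged into one kernel-verified Lean document; each statement's English description precedes it below -/
import Mathlib

section
/- For all real numbers a, b > 0, p > 1, and τ₁, τ₂ ≥ 0, one has (b - a)(τ₁^{p+1} a^{-p} - τ₂^{p+1} b^{-p}) ≥ (τ₁τ₂/(p-1)) ((b/τ₂)^{(-p+1)/2} - (a/τ₁)^{(-p+1)/2})² - max{4, (6p-5)/2} (τ₂ - τ₁)² ((b/τ₂)^{-p+1} + (a/τ₁)^{-p+1}). -/
open Real Set


private lemma rpow_helper (t : ℝ) (ht : 0 < t) (u v w : ℝ) (h : u + v = w) :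
    t ^ u * t ^ v = t ^ w := by rw [← Real.rpow_add ht, h]


private lemma nonneg_of_deriv (f f' : ℝ → ℝ)
    (hder : ∀ t ∈ Set.Ici (1:ℝ), HasDerivAt f (f' t) t)
    (h1 : f 1 = 0) (hf' : ∀ t ∈ Set.Ici (1:ℝ), 0 ≤ f' t) :
    ∀ t ∈ Set.Ici (1:ℝ), 0 ≤ f t := by
  intro t ht
  have hmono : MonotoneOn f (Set.Ici 1) :=
    monotoneOn_of_deriv_nonneg (convex_Ici 1)
      (fun x hx => (hder x hx).continuousAt.continuousWithinAt)
      (fun x hx => (hder x (interior_subset hx)).differentiableAt.differentiableWithinAt)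
      (fun x hx => by
        rw [(hder x (interior_subset hx)).deriv]
        exact hf' x (interior_subset hx))
  have h2 := hmono self_mem_Ici ht ht
  rw [h1] at h2
  exact h2


private lemma ktp_nonneg (p : ℝ) (hp : 1 < p) :
    ∀ t ∈ Set.Ici (1:ℝ),
      0 ≤ (p-1)^2*((p+1)*t^p + (p-1)) - 4*p*(p-1)*((p+1)/2*t^((p+1)/2-1) - 1) := by
  apply nonneg_of_deriv _
    (fun t => (p-1)^2*((p+1)*(p*t^(p-1))) -
      4*p*(p-1)*((p+1)/2*(((p+1)/2-1)*t^((p+1)/2-1-1))))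
  · intro t ht
    have ht0 : 0 < t := lt_of_lt_of_le one_pos ht
    have h1 : HasDerivAt (fun s : ℝ => s ^ p) (p * t ^ (p-1)) t :=
      Real.hasDerivAt_rpow_const (Or.inl ht0.ne')
    have h2 : HasDerivAt (fun s : ℝ => s ^ ((p+1)/2-1)) (((p+1)/2-1) * t ^ ((p+1)/2-1-1)) t :=
      Real.hasDerivAt_rpow_const (Or.inl ht0.ne')
    exact (((h1.const_mul (p+1)).add_const (p-1)).const_mul ((p-1)^2)).sub
      (((h2.const_mul ((p+1)/2)).sub_const 1).const_mul (4*p*(p-1)))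
  · simp [Real.one_rpow]
    ring
  · intro t ht
    have hmono := Real.rpow_le_rpow_of_exponent_le ht (show (p+1)/2-1-1 ≤ p-1 by linarith)
    have hc : (0:ℝ) ≤ p*(p+1)*(p-1)^2 := by positivity
    have := mul_nonneg hc (sub_nonneg.mpr hmono)
    nlinarith [this]


private lemma kt_nonneg (p : ℝ) (hp : 1 < p) :
    ∀ t ∈ Set.Ici (1:ℝ),
      0 ≤ (p-1)^2*(t^(p+1) + (p-1)*t - p) - 4*p*(p-1)*(t^((p+1)/2) - t) := by
  apply nonneg_of_deriv _
    (fun t => (p-1)^2*((p+1)*t^p + (p-1)) - 4*p*(p-1)*((p+1)/2*t^((p+1)/2-1) - 1))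
  · intro t ht
    have ht0 : 0 < t := lt_of_lt_of_le one_pos ht
    have h1 : HasDerivAt (fun s : ℝ => s ^ (p+1)) ((p+1) * t ^ (p+1-1)) t :=
      Real.hasDerivAt_rpow_const (Or.inl ht0.ne')
    rw [show p+1-1 = p by ring] at h1
    have h2 : HasDerivAt (fun s : ℝ => s ^ ((p+1)/2)) (((p+1)/2) * t ^ ((p+1)/2-1)) t :=
      Real.hasDerivAt_rpow_const (Or.inl ht0.ne')
    have hC := ((h1.add ((hasDerivAt_id t).const_mul (p-1))).sub_const p).const_mul
        ((p-1)^2) |>.sub ((h2.sub (hasDerivAt_id t)).const_mul (4*p*(p-1)))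
    have hEq : (p-1)^2*((p+1)*t^p + (p-1)) - 4*p*(p-1)*((p+1)/2*t^((p+1)/2-1) - 1)
        = (p-1)^2 * ((p+1) * t ^ p + (p-1) * 1) - 4*p*(p-1) * (((p+1)/2) * t^((p+1)/2-1) - 1) := by
      ring
    rw [hEq]
    exact hC
  · simp [Real.one_rpow]
  · exact ktp_nonneg p hp


private lemma htilde_nonneg (p : ℝ) (hp : 1 < p) :
    ∀ t ∈ Set.Ici (1:ℝ),
      0 ≤ (p-1)^2*((t-1)*(1 - t^(-p))) - 4*p*(1 - t^((-p+1)/2))^2 := by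
  apply nonneg_of_deriv _
    (fun t => t^(-p-1) * ((p-1)^2*(t^(p+1) + (p-1)*t - p) - 4*p*(p-1)*(t^((p+1)/2) - t)))
  · intro t ht
    have ht0 : 0 < t := lt_of_lt_of_le one_pos ht
    have h1 : HasDerivAt (fun s : ℝ => s ^ (-p)) ((-p) * t ^ (-p-1)) t :=
      Real.hasDerivAt_rpow_const (Or.inl ht0.ne')
    have h2 : HasDerivAt (fun s : ℝ => s ^ ((-p+1)/2)) (((-p+1)/2) * t ^ ((-p+1)/2-1)) t :=
      Real.hasDerivAt_rpow_const (Or.inl ht0.ne')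
    have hA : HasDerivAt (fun s : ℝ => (s-1)*(1 - s^(-p)))
        (1*(1 - t^(-p)) + (t-1)*(0 - (-p)*t^(-p-1))) t :=
      ((hasDerivAt_id t).sub_const 1).mul ((hasDerivAt_const t 1).sub h1)
    have hB : HasDerivAt (fun s : ℝ => (1 - s^((-p+1)/2))^2)
        (((2:ℕ):ℝ)*(1 - t^((-p+1)/2))^(2-1)*(0 - ((-p+1)/2)*t^((-p+1)/2-1))) t :=
      ((hasDerivAt_const t 1).sub h2).pow 2
    have hC := (hA.const_mul ((p-1)^2)).sub (hB.const_mul (4*p))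
    have E1 : t^(-p-1) * t^(p+1) = 1 := by
      rw [rpow_helper t ht0 (-p-1) (p+1) 0 (by ring), Real.rpow_zero]
    have E2 : t^(-p-1) * t = t^(-p) := by
      have h := rpow_helper t ht0 (-p-1) 1 (-p) (by ring)
      rwa [Real.rpow_one] at h
    have E3 : t^(-p-1) * t^((p+1)/2) = t^((-p+1)/2-1) :=
      rpow_helper t ht0 _ _ _ (by ring)
    have E4 : t^((-p+1)/2) * t^((-p+1)/2-1) = t^(-p) :=
      rpow_helper t ht0 _ _ _ (by ring)
    have hEq : t^(-p-1) * ((p-1)^2*(t^(p+1) + (p-1)*t - p) - 4*p*(p-1)*(t^((p+1)/2) - t))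
        = (p-1)^2 * (1*(1 - t^(-p)) + (t-1)*(0 - (-p)*t^(-p-1)))
          - 4*p * (((2:ℕ):ℝ)*(1 - t^((-p+1)/2))^(2-1)*(0 - ((-p+1)/2)*t^((-p+1)/2-1))) := by
      push_cast
      linear_combination (p-1)^2*E1 + ((p-1)^3 + 4*p*(p-1) - p*(p-1)^2)*E2
        - 4*p*(p-1)*E3 - 4*p*(p-1)*E4
    rw [hEq]
    exact hC
  · simp [Real.one_rpow]
  · intro t ht
    have ht0 : 0 < t := lt_of_lt_of_le one_pos ht
    exact mul_nonneg (Real.rpow_nonneg ht0.le _) (kt_nonneg p hp t ht)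


private lemma key_aux (p x y : ℝ) (hp : 1 < p) (hx : 0 < x) (hy : 0 < y) (hxy : x ≤ y) :
    4*p*(x^((-p+1)/2) - y^((-p+1)/2))^2 ≤ (p-1)^2*((y-x)*(x^(-p) - y^(-p))) := by
  set t := y / x with htdef
  have ht0 : 0 < t := div_pos hy hx
  have ht1 : 1 ≤ t := (one_le_div hx).mpr hxy
  have hyx : y = x * t := by rw [htdef]; field_simp
  have H := htilde_nonneg p hp t ht1
  have emul : y^(-p) = x^(-p) * t^(-p) := by
    rw [hyx]; exact Real.mul_rpow hx.le ht0.le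
  have emul2 : y^((-p+1)/2) = x^((-p+1)/2) * t^((-p+1)/2) := by
    rw [hyx]; exact Real.mul_rpow hx.le ht0.le
  have hx2 : x^((-p+1)/2) * x^((-p+1)/2) = x * x^(-p) := by
    rw [← Real.rpow_add hx, show (-p+1)/2 + (-p+1)/2 = -p+1 by ring,
      Real.rpow_add hx (-p) 1, Real.rpow_one]
    ring
  have lhs_eq : 4*p*(x^((-p+1)/2) - y^((-p+1)/2))^2
      = (x * x^(-p)) * (4*p*(1 - t^((-p+1)/2))^2) := by
    rw [emul2]
    linear_combination (4*p*(1 - t^((-p+1)/2))^2) * hx2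
  have rhs_eq : (p-1)^2*((y-x)*(x^(-p) - y^(-p)))
      = (x * x^(-p)) * ((p-1)^2*((t-1)*(1 - t^(-p)))) := by
    rw [emul, hyx]; ring
  rw [lhs_eq, rhs_eq]
  have hxp : 0 ≤ x * x^(-p) := mul_nonneg hx.le (Real.rpow_nonneg hx.le _)
  nlinarith [mul_nonneg hxp H]


private lemma key (p x y : ℝ) (hp : 1 < p) (hx : 0 < x) (hy : 0 < y) :
    4*p*(x^((-p+1)/2) - y^((-p+1)/2))^2 ≤ (p-1)^2*((y-x)*(x^(-p) - y^(-p))) := by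
  rcases le_total x y with h | h
  · exact key_aux p x y hp hx hy h
  · have := key_aux p y x hp hy hx h
    nlinarith [this]

private lemma quadform (p c τ₁ τ₂ X Y : ℝ) (hp : 1 < p) (h1 : 0 < τ₁) (h2 : 0 < τ₂)
    (hc4 : (4:ℝ) ≤ c) (hc6 : (6*p-5)/2 ≤ c) :
    0 ≤ (3*p+1)*(τ₁*τ₂)*(X-Y)^2
      + (p-1)^2*((τ₂-τ₁)*(τ₁*X^2 - τ₂*Y^2) + c*(τ₂-τ₁)^2*(X^2+Y^2)) := by
  obtain ⟨B, hBdef⟩ : ∃ B, B = (3*p+1)*(τ₁*τ₂) := ⟨_, rfl⟩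
  obtain ⟨α, hαdef⟩ : ∃ α, α = B + (p-1)^2*((τ₂-τ₁)*τ₁ + c*(τ₂-τ₁)^2) := ⟨_, rfl⟩
  obtain ⟨γ, hγdef⟩ : ∃ γ, γ = B + (p-1)^2*(c*(τ₂-τ₁)^2 - (τ₂-τ₁)*τ₂) := ⟨_, rfl⟩
  have hs : 0 < τ₁*τ₂ := mul_pos h1 h2
  have hBpos : 0 < B := by rw [hBdef]; nlinarith
  have h6 : 6*(p-1) ≤ 2*c - 1 := by linarith
  have hccm : 0 ≤ c*(c-1) := by nlinarith
  have inner : 0 ≤ (2*c-1)*B - (p-1)^2*(τ₁*τ₂) + (p-1)^2*(c*(c-1))*(τ₂-τ₁)^2 := by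
    have e1 : 0 ≤ (2*c-1-6*(p-1))*B := mul_nonneg (by linarith) hBpos.le
    have e2 : 0 ≤ (p-1)*(17*p+7)*(τ₁*τ₂) := by
      apply mul_nonneg (by nlinarith) hs.le
    have e3 : 0 ≤ (p-1)^2*(c*(c-1))*(τ₂-τ₁)^2 :=
      mul_nonneg (mul_nonneg (sq_nonneg _) hccm) (sq_nonneg _)
    have e4 : 6*(p-1)*B - (p-1)^2*(τ₁*τ₂) = (p-1)*(17*p+7)*(τ₁*τ₂) := by
      rw [hBdef]; ring
    linarith
  have hαγ : B^2 ≤ α*γ := by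
    have expand : α*γ - B^2
        = (p-1)^2*(τ₂-τ₁)^2*((2*c-1)*B - (p-1)^2*(τ₁*τ₂)
            + (p-1)^2*(c*(c-1))*(τ₂-τ₁)^2) := by
      rw [hαdef, hγdef]; ring
    have hnn := mul_nonneg (mul_nonneg (sq_nonneg (p-1)) (sq_nonneg (τ₂-τ₁))) inner
    linarith [expand, hnn]
  have hsum : 0 < α + γ := by
    have hsumeq : α + γ = 2*B + (p-1)^2*(2*c-1)*(τ₂-τ₁)^2 := by
      rw [hαdef, hγdef]; ring
    have := mul_nonneg (mul_nonneg (sq_nonneg (p-1)) (by linarith : (0:ℝ) ≤ 2*c-1))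
      (sq_nonneg (τ₂-τ₁))
    nlinarith [this]
  have hγpos : 0 < γ := by
    rcases le_or_gt γ 0 with hγ | hγ
    · exfalso
      have hα : 0 < α := by linarith
      nlinarith [mul_nonpos_of_nonneg_of_nonpos hα.le hγ, pow_pos hBpos 2]
    · exact hγ
  have hE : (3*p+1)*(τ₁*τ₂)*(X-Y)^2
      + (p-1)^2*((τ₂-τ₁)*(τ₁*X^2 - τ₂*Y^2) + c*(τ₂-τ₁)^2*(X^2+Y^2))
      = α*X^2 - 2*B*X*Y + γ*Y^2 := by
    rw [hαdef, hγdef, hBdef]; ring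
  rw [hE]
  clear hE hBdef hαdef hγdef hsum inner hccm h6
  have hq : 0 ≤ γ*(α*X^2 - 2*B*X*Y + γ*Y^2) := by
    have hh1 := sq_nonneg (B*X - γ*Y)
    have hh2 := mul_nonneg (sub_nonneg.mpr hαγ) (sq_nonneg X)
    linarith [hh1, hh2]
  nlinarith [hq, hγpos]


private lemma combine (p c τ₁ τ₂ x y P Q X Y : ℝ) (hp : 1 < p)
    (ht1 : 0 < τ₁) (ht2 : 0 < τ₂)
    (hc4 : (4:ℝ) ≤ c) (hc6 : (6*p-5)/2 ≤ c)
    (hP : x * P = X^2) (hQ : y * Q = Y^2)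
    (hkey : 4*p*(X - Y)^2 ≤ (p-1)^2*((y - x)*(P - Q))) :
    τ₁*τ₂/(p-1)*(Y - X)^2 - c*(τ₂-τ₁)^2*(Y^2 + X^2) ≤ (τ₂*y - τ₁*x)*(τ₁*P - τ₂*Q) := by
  have hp1 : (0:ℝ) < p - 1 := by linarith
  have hs : 0 < τ₁*τ₂ := mul_pos ht1 ht2
  have hG := quadform p c τ₁ τ₂ X Y hp ht1 ht2 hc4 hc6
  have hkey2 : 4*p*(τ₁*τ₂)*(X-Y)^2 ≤ (p-1)^2*(τ₁*τ₂*((y-x)*(P-Q))) := by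
    have h := mul_le_mul_of_nonneg_left hkey hs.le
    nlinarith [h]
  have hid : (τ₂*y - τ₁*x)*(τ₁*P - τ₂*Q)
      = τ₁*τ₂*((y-x)*(P-Q)) + (τ₂-τ₁)*(τ₁*X^2 - τ₂*Y^2) := by
    linear_combination (τ₂-τ₁)*τ₁*hP - (τ₂-τ₁)*τ₂*hQ
  have H2 : (p-1)*(τ₁*τ₂*(Y-X)^2)
      ≤ (p-1)^2*((τ₂*y - τ₁*x)*(τ₁*P - τ₂*Q) + c*(τ₂-τ₁)^2*(Y^2+X^2)) := by
    rw [hid]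
    linarith [hkey2, hG]
  have H3 : (p-1)*(τ₁*τ₂*(Y-X)^2)
      ≤ (p-1)*(((τ₂*y - τ₁*x)*(τ₁*P - τ₂*Q) + c*(τ₂-τ₁)^2*(Y^2+X^2))*(p-1)) := by
    linarith [H2]
  have H4 := le_of_mul_le_mul_left H3 hp1
  rw [div_mul_eq_mul_div, sub_le_iff_le_add, div_le_iff₀ hp1]
  linarith [H4]


/-- Lemma 4.4 (technical lemma of Kassmann): for positive `a b`, `p > 1` and
positive `τ₁ τ₂`, the stated algebraic inequality holds (powers are real powers). -/
theorem stmt_0 (a b p τ₁ τ₂ : ℝ) (ha : 0 < a) (hb : 0 < b) (hp : 1 < p)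
    (hτ₁ : 0 < τ₁) (hτ₂ : 0 < τ₂) :
    (b - a) * (τ₁ ^ (p + 1) * a ^ (-p) - τ₂ ^ (p + 1) * b ^ (-p)) ≥
      τ₁ * τ₂ / (p - 1) *
          ((b / τ₂) ^ ((-p + 1) / 2) - (a / τ₁) ^ ((-p + 1) / 2)) ^ 2 -
        max 4 ((6 * p - 5) / 2) * (τ₂ - τ₁) ^ 2 *
          ((b / τ₂) ^ (-p + 1) + (a / τ₁) ^ (-p + 1)) := by
  have hx : 0 < a / τ₁ := div_pos ha hτ₁
  have hy : 0 < b / τ₂ := div_pos hb hτ₂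
  have e1 : τ₁ ^ (p + 1) * a ^ (-p) = τ₁ * (a / τ₁) ^ (-p) := by
    rw [Real.div_rpow ha.le hτ₁.le, Real.rpow_neg hτ₁.le, div_inv_eq_mul,
      Real.rpow_add hτ₁, Real.rpow_one]
    ring
  have e2 : τ₂ ^ (p + 1) * b ^ (-p) = τ₂ * (b / τ₂) ^ (-p) := by
    rw [Real.div_rpow hb.le hτ₂.le, Real.rpow_neg hτ₂.le, div_inv_eq_mul,
      Real.rpow_add hτ₂, Real.rpow_one]
    ring
  have hba : b - a = τ₂ * (b / τ₂) - τ₁ * (a / τ₁) := by field_simp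
  have eX2 : (a / τ₁) ^ (-p + 1) = ((a / τ₁) ^ ((-p + 1) / 2)) ^ 2 := by
    rw [pow_two, ← Real.rpow_add hx, show (-p+1)/2 + (-p+1)/2 = -p+1 by ring]
  have eY2 : (b / τ₂) ^ (-p + 1) = ((b / τ₂) ^ ((-p + 1) / 2)) ^ 2 := by
    rw [pow_two, ← Real.rpow_add hy, show (-p+1)/2 + (-p+1)/2 = -p+1 by ring]
  have hP : (a / τ₁) * (a / τ₁) ^ (-p) = ((a / τ₁) ^ ((-p + 1) / 2)) ^ 2 := by
    rw [← eX2, Real.rpow_add hx (-p) 1, Real.rpow_one]; ring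
  have hQ : (b / τ₂) * (b / τ₂) ^ (-p) = ((b / τ₂) ^ ((-p + 1) / 2)) ^ 2 := by
    rw [← eY2, Real.rpow_add hy (-p) 1, Real.rpow_one]; ring
  have hkey := key p (a / τ₁) (b / τ₂) hp hx hy
  have hc4 : (4:ℝ) ≤ max 4 ((6 * p - 5) / 2) := le_max_left _ _
  have hc6 : (6 * p - 5) / 2 ≤ max 4 ((6 * p - 5) / 2) := le_max_right _ _
  rw [ge_iff_le, hba, e1, e2, eX2, eY2]
  exact combine p (max 4 ((6 * p - 5) / 2)) τ₁ τ₂ (a / τ₁) (b / τ₂)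
    ((a / τ₁) ^ (-p)) ((b / τ₂) ^ (-p))
    ((a / τ₁) ^ ((-p + 1) / 2)) ((b / τ₂) ^ ((-p + 1) / 2))
    hp hτ₁ hτ₂ hc4 hc6 hP hQ hkey
end

section
/- Let ν be a measure on ℝ^d and α ∈ (0,2). Then ν satisfies ∫ (min(r,|z|))² ν(dz) ≤ C_U r^{2-α} for all r ∈ (0,1] (condition (U)) if and only if there exist constants C₀, C₁ > 0 such that ∫ min(|z|²,1) ν(dz) ≤ C₀ (condition (U0)) and ∫_{B_r(0)} |z|² ν(dz) ≤ C₁ r^{2-α} for all r ∈ (0,1) (condition (U1)). Moreover, one can take C₀ = C₁ = C_U in one direction, and C_U = (2^{2-α}/(1-2^{-α}) + 1)C₁ + 4C₀ in the other. -/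
open MeasureTheory Metric

variable {d : ℕ}

private lemma min_sq_eq (z : EuclideanSpace ℝ (Fin d)) :
    min (‖z‖ ^ 2) 1 = (min 1 ‖z‖) ^ 2 := by
  rcases le_total ‖z‖ 1 with h | h
  · rw [min_eq_right h, min_eq_left (by nlinarith [norm_nonneg z])]
  · rw [min_eq_left h, min_eq_right (by nlinarith), one_pow]

private lemma dir2 (ν : Measure (EuclideanSpace ℝ (Fin d))) (α : ℝ)
    (C_U : ℝ)
    (hU : ∀ r : ℝ, 0 < r → r ≤ 1 →
      ∫⁻ z, ENNReal.ofReal ((min r ‖z‖) ^ 2) ∂ν ≤ ENNReal.ofReal (C_U * r ^ (2 - α))) :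
    (∫⁻ z, ENNReal.ofReal (min (‖z‖ ^ 2) 1) ∂ν ≤ ENNReal.ofReal C_U) ∧
      (∀ r : ℝ, 0 < r → r < 1 →
        ∫⁻ z in ball (0 : EuclideanSpace ℝ (Fin d)) r, ENNReal.ofReal (‖z‖ ^ 2) ∂ν ≤
          ENNReal.ofReal (C_U * r ^ (2 - α))) := by
  constructor
  · have h1 := hU 1 one_pos le_rfl
    rw [Real.one_rpow, mul_one] at h1
    calc ∫⁻ z, ENNReal.ofReal (min (‖z‖ ^ 2) 1) ∂ν
        = ∫⁻ z, ENNReal.ofReal ((min 1 ‖z‖) ^ 2) ∂ν :=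
          lintegral_congr fun z => by rw [min_sq_eq]
      _ ≤ ENNReal.ofReal C_U := h1
  · intro r hr0 hr1
    calc ∫⁻ z in ball (0 : EuclideanSpace ℝ (Fin d)) r, ENNReal.ofReal (‖z‖ ^ 2) ∂ν
        = ∫⁻ z in ball (0 : EuclideanSpace ℝ (Fin d)) r,
            ENNReal.ofReal ((min r ‖z‖) ^ 2) ∂ν := by
          refine setLIntegral_congr_fun measurableSet_ball (fun z hz => ?_)
          rw [mem_ball, dist_zero_right] at hz
          rw [min_eq_right hz.le]
      _ ≤ ∫⁻ z, ENNReal.ofReal ((min r ‖z‖) ^ 2) ∂ν := setLIntegral_le_lintegral _ _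
      _ ≤ ENNReal.ofReal (C_U * r ^ (2 - α)) := hU r hr0 hr1.le

private lemma exists_dyadic {ρ x : ℝ} (hρ : 0 < ρ) (hx : ρ ≤ x) :
    ∃ k : ℕ, 2 ^ k * ρ ≤ x ∧ x < 2 ^ (k + 1) * ρ := by
  have ht : 1 ≤ x / ρ := (one_le_div hρ).2 hx
  have ht0 : 0 < x / ρ := lt_of_lt_of_le one_pos ht
  have hK0 : 0 ≤ Int.log 2 (x / ρ) := by
    rw [Int.log_of_one_le_right _ ht]; exact Int.natCast_nonneg _
  refine ⟨(Int.log 2 (x / ρ)).toNat, ?_, ?_⟩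
  · have h1 : ((2:ℝ) ^ (Int.log 2 (x / ρ)).toNat : ℝ) = (2:ℝ) ^ (Int.log 2 (x / ρ)) := by
      rw [← zpow_natCast, Int.toNat_of_nonneg hK0]
    have h2 := Int.zpow_log_le_self (b := 2) (r := x / ρ) one_lt_two ht0
    rw [h1]
    calc (2:ℝ) ^ (Int.log 2 (x / ρ)) * ρ ≤ (x / ρ) * ρ := by
          exact mul_le_mul_of_nonneg_right (by exact_mod_cast h2) hρ.le
      _ = x := div_mul_cancel₀ x hρ.ne'
  · have h1 : ((2:ℝ) ^ ((Int.log 2 (x / ρ)).toNat + 1) : ℝ)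
        = (2:ℝ) ^ (Int.log 2 (x / ρ) + 1) := by
      rw [← zpow_natCast]
      push_cast [Int.toNat_of_nonneg hK0]
      ring_nf
    have h2 := Int.lt_zpow_succ_log_self (b := 2) one_lt_two (x / ρ)
    rw [h1]
    calc x = (x / ρ) * ρ := (div_mul_cancel₀ x hρ.ne').symm
      _ < (2:ℝ) ^ (Int.log 2 (x / ρ) + 1) * ρ := by
          exact mul_lt_mul_of_pos_right (by exact_mod_cast h2) hρ

private lemma calc1 {α ρ : ℝ} (hρ : 0 < ρ) (k : ℕ) :
    ((2:ℝ) ^ (k + 1) * ρ) ^ (2 - α) / ((2:ℝ) ^ k * ρ) ^ 2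
      = 2 ^ (2 - α) * ((2:ℝ) ^ (-α)) ^ k * ρ ^ (-α) := by
  have h2 : (0:ℝ) < 2 := two_pos
  rw [Real.mul_rpow (by positivity) hρ.le, mul_pow]
  rw [← Real.rpow_natCast ((2:ℝ) ^ k) 2, ← Real.rpow_natCast (2:ℝ) (k + 1),
    ← Real.rpow_natCast (2:ℝ) k, ← Real.rpow_natCast ρ 2,
    ← Real.rpow_mul h2.le, ← Real.rpow_mul h2.le]
  rw [mul_div_mul_comm, ← Real.rpow_sub h2, ← Real.rpow_sub hρ]
  rw [← Real.rpow_natCast ((2:ℝ) ^ (-α)) k, ← Real.rpow_mul h2.le,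
    ← Real.rpow_add h2]
  congr 1
  · push_cast; ring_nf
  · push_cast; ring_nf

private lemma cheb' (ν : Measure (EuclideanSpace ℝ (Fin d)))
    {A : Set (EuclideanSpace ℝ (Fin d))} {c : ℝ} (hc : 0 < c) {B : ℝ}
    (h1 : ENNReal.ofReal (c ^ 2) * ν A ≤ ENNReal.ofReal B) :
    ν A ≤ ENNReal.ofReal (B / c ^ 2) := by
  have hc2 : (0:ℝ) < c ^ 2 := by positivity
  rw [ENNReal.ofReal_div_of_pos hc2,
    ENNReal.le_div_iff_mul_le (Or.inl (by simp [hc2, hc.ne'])) (Or.inl ENNReal.ofReal_ne_top),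
    mul_comm]
  exact h1

private lemma dir3 (ν : Measure (EuclideanSpace ℝ (Fin d))) (α : ℝ)
    (hα : α ∈ Set.Ioo (0 : ℝ) 2) (C₀ C₁ : ℝ) (h₀ : 0 < C₀) (h₁ : 0 < C₁)
    (hU0 : ∫⁻ z, ENNReal.ofReal (min (‖z‖ ^ 2) 1) ∂ν ≤ ENNReal.ofReal C₀)
    (hU1 : ∀ r : ℝ, 0 < r → r < 1 →
      ∫⁻ z in ball (0 : EuclideanSpace ℝ (Fin d)) r, ENNReal.ofReal (‖z‖ ^ 2) ∂ν ≤
        ENNReal.ofReal (C₁ * r ^ (2 - α)))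
    (r : ℝ) (hr0 : 0 < r) (hr1 : r ≤ 1) :
    ∫⁻ z, ENNReal.ofReal ((min r ‖z‖) ^ 2) ∂ν ≤
      ENNReal.ofReal (((2 ^ (2 - α) / (1 - 2 ^ (-α)) + 1) * C₁ + 4 * C₀) * r ^ (2 - α)) := by
  obtain ⟨hα0, hα2⟩ := hα
  have h2α : (0:ℝ) < 2 - α := by linarith
  have hq0 : (0:ℝ) < 2 ^ (-α) := Real.rpow_pos_of_pos two_pos _
  have hq1 : (2:ℝ) ^ (-α) < 1 :=
    Real.rpow_lt_one_of_one_lt_of_neg one_lt_two (by linarith)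
  have hq1' : (0:ℝ) < 1 - 2 ^ (-α) := by linarith
  have h2a : (0:ℝ) < 2 ^ (2 - α) := Real.rpow_pos_of_pos two_pos _
  set ρ := min r (1/2) with hρdef
  have hρ0 : 0 < ρ := lt_min hr0 (by norm_num)
  have hρr : ρ ≤ r := min_le_left _ _
  have hρh : ρ ≤ 1/2 := min_le_right _ _
  set E := EuclideanSpace ℝ (Fin d)
  set S : Set E := ball 0 (1/2) \ ball 0 ρ with hSdef
  set T : Set E := (ball (0:E) (1/2))ᶜ with hTdef
  have mS : MeasurableSet S := measurableSet_ball.diff measurableSet_ball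
  have mT : MeasurableSet T := measurableSet_ball.compl
  have mnorm : Measurable fun z : E => ENNReal.ofReal (‖z‖ ^ 2) :=
    (measurable_norm.pow_const 2).ennreal_ofReal
  -- pointwise bound
  have hpt : ∀ z : E, ENNReal.ofReal ((min r ‖z‖) ^ 2) ≤
      (ball (0:E) ρ).indicator (fun z => ENNReal.ofReal (‖z‖ ^ 2)) z
      + S.indicator (fun _ => ENNReal.ofReal (r ^ 2)) z
      + T.indicator (fun _ => ENNReal.ofReal (r ^ 2)) z := by
    intro z
    have hminr : (min r ‖z‖) ^ 2 ≤ r ^ 2 := by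
      refine pow_le_pow_left₀ (le_min hr0.le (norm_nonneg z)) (min_le_left _ _) 2
    by_cases h1 : ‖z‖ < ρ
    · have hz : z ∈ ball (0:E) ρ := by rwa [mem_ball, dist_zero_right]
      rw [Set.indicator_of_mem hz]
      refine le_trans ?_ (le_add_right (le_add_right le_rfl))
      refine ENNReal.ofReal_le_ofReal ?_
      refine pow_le_pow_left₀ (le_min hr0.le (norm_nonneg z)) (min_le_right _ _) 2
    · by_cases h2 : ‖z‖ < 1/2
      · have hz : z ∈ S := by
          constructor
          · rwa [mem_ball, dist_zero_right]
          · rw [mem_ball, dist_zero_right]; exact fun h => h1 h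
        rw [Set.indicator_of_mem hz]
        refine le_trans (ENNReal.ofReal_le_ofReal hminr) ?_
        exact le_add_right (le_add_left le_rfl)
      · have hz : z ∈ T := by
          rw [hTdef, Set.mem_compl_iff, mem_ball, dist_zero_right]
          exact h2
        rw [Set.indicator_of_mem hz]
        exact le_trans (ENNReal.ofReal_le_ofReal hminr) (le_add_left le_rfl)
  have step1 : ∫⁻ z, ENNReal.ofReal ((min r ‖z‖) ^ 2) ∂ν ≤
      (∫⁻ z in ball (0:E) ρ, ENNReal.ofReal (‖z‖ ^ 2) ∂ν)
      + ENNReal.ofReal (r ^ 2) * ν S + ENNReal.ofReal (r ^ 2) * ν T := by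
    refine le_trans (lintegral_mono hpt) ?_
    rw [lintegral_add_right _ (measurable_const.indicator mT),
      lintegral_add_right _ (measurable_const.indicator mS),
      lintegral_indicator measurableSet_ball, lintegral_indicator mS,
      lintegral_indicator mT, setLIntegral_const, setLIntegral_const]
  -- term A
  have hA : ∫⁻ z in ball (0:E) ρ, ENNReal.ofReal (‖z‖ ^ 2) ∂ν ≤
      ENNReal.ofReal (C₁ * r ^ (2 - α)) := by
    refine le_trans (hU1 ρ hρ0 (lt_of_le_of_lt hρh (by norm_num))) ?_
    exact ENNReal.ofReal_le_ofReal (by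
      have := Real.rpow_le_rpow hρ0.le hρr h2α.le
      nlinarith)
  -- term C
  have hνT : ν T ≤ ENNReal.ofReal (4 * C₀) := by
    have h1 : ENNReal.ofReal ((1/2) ^ 2) * ν T ≤ ENNReal.ofReal C₀ := by
      rw [← setLIntegral_const]
      refine le_trans (setLIntegral_mono ((measurable_norm.pow_const 2).min
        measurable_const).ennreal_ofReal fun z hz => ?_) (le_trans
        (setLIntegral_le_lintegral _ _) hU0)
      rw [hTdef, Set.mem_compl_iff, mem_ball, dist_zero_right, not_lt] at hz
      refine ENNReal.ofReal_le_ofReal (le_min (by nlinarith) (by norm_num))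
    have := cheb' ν (c := 1/2) (by norm_num) h1
    refine le_trans this (le_of_eq (by norm_num [div_eq_mul_inv, mul_comm]))
  have hC : ENNReal.ofReal (r ^ 2) * ν T ≤ ENNReal.ofReal (4 * C₀ * r ^ (2 - α)) := by
    calc ENNReal.ofReal (r ^ 2) * ν T ≤
        ENNReal.ofReal (r ^ 2) * ENNReal.ofReal (4 * C₀) :=
          mul_le_mul_right hνT _
      _ = ENNReal.ofReal (r ^ 2 * (4 * C₀)) := (ENNReal.ofReal_mul (by positivity)).symm
      _ ≤ ENNReal.ofReal (4 * C₀ * r ^ (2 - α)) := by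
          refine ENNReal.ofReal_le_ofReal ?_
          have hr2 : r ^ 2 ≤ r ^ (2 - α) := by
            have := Real.rpow_le_rpow_of_exponent_ge hr0 hr1 (by linarith : 2 - α ≤ (2:ℝ))
            rwa [Real.rpow_two] at this
          nlinarith
  -- term B
  have hB : ENNReal.ofReal (r ^ 2) * ν S ≤
      ENNReal.ofReal (2 ^ (2 - α) / (1 - 2 ^ (-α)) * C₁ * r ^ (2 - α)) := by
    rcases lt_or_ge (1/2 : ℝ) r with hc | hc
    · have hρeq : ρ = 1/2 := min_eq_right hc.le
      have hSempty : S = ∅ := by rw [hSdef, hρeq, Set.diff_self]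
      rw [hSempty, measure_empty, mul_zero]
      exact zero_le
    · have hρeq : ρ = r := min_eq_left hc
      set D : ℕ → Set E := fun k =>
        S ∩ (ball (0:E) (2 ^ (k+1) * ρ) \ ball (0:E) (2 ^ k * ρ)) with hDdef
      have hcover : S ⊆ ⋃ k, D k := by
        intro z hz
        have hz1 : ρ ≤ ‖z‖ := by
          have := hz.2; rw [mem_ball, dist_zero_right, not_lt] at this; exact this
        obtain ⟨k, hk1, hk2⟩ := exists_dyadic hρ0 hz1
        refine Set.mem_iUnion.2 ⟨k, hz, ?_, ?_⟩
        · rwa [mem_ball, dist_zero_right]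
        · rw [mem_ball, dist_zero_right, not_lt]; exact hk1
      have hDk : ∀ k : ℕ, ν (D k) ≤
          ENNReal.ofReal ((C₁ * 2 ^ (2 - α) * ρ ^ (-α)) * ((2:ℝ) ^ (-α)) ^ k) := by
        intro k
        have hck : (0:ℝ) < 2 ^ k * ρ := by positivity
        have ht : D k ⊆ ball (0:E) (min (2 ^ (k+1) * ρ) (1/2)) := by
          intro z hz
          rw [mem_ball, dist_zero_right, lt_min_iff]
          have h1 := hz.2.1; rw [mem_ball, dist_zero_right] at h1
          have h2 := hz.1.1; rw [mem_ball, dist_zero_right] at h2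
          exact ⟨h1, h2⟩
        have htpos : (0:ℝ) < min (2 ^ (k+1) * ρ) (1/2) := lt_min (by positivity) (by norm_num)
        have hint : ∫⁻ z in D k, ENNReal.ofReal (‖z‖ ^ 2) ∂ν ≤
            ENNReal.ofReal (C₁ * (2 ^ (k+1) * ρ) ^ (2 - α)) := by
          refine le_trans (lintegral_mono_set ht) ?_
          refine le_trans (hU1 _ htpos (lt_of_le_of_lt (min_le_right _ _) (by norm_num))) ?_
          refine ENNReal.ofReal_le_ofReal ?_
          refine mul_le_mul_of_nonneg_left ?_ h₁.le
          exact Real.rpow_le_rpow htpos.le (min_le_left _ _) h2α.le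
        have hlow : ENNReal.ofReal ((2 ^ k * ρ) ^ 2) * ν (D k) ≤
            ∫⁻ z in D k, ENNReal.ofReal (‖z‖ ^ 2) ∂ν := by
          rw [← setLIntegral_const]
          refine setLIntegral_mono mnorm fun z hz => ENNReal.ofReal_le_ofReal ?_
          have h3 := hz.2.2; rw [mem_ball, dist_zero_right, not_lt] at h3
          exact pow_le_pow_left₀ hck.le h3 2
        refine le_trans (cheb' ν hck (le_trans hlow hint)) (le_of_eq ?_)
        rw [mul_div_assoc, calc1 hρ0]
        ring_nf
      calc ENNReal.ofReal (r ^ 2) * ν S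
          ≤ ENNReal.ofReal (r ^ 2) * ∑' k, ν (D k) :=
            mul_le_mul_right (le_trans (measure_mono hcover) (measure_iUnion_le _)) _
        _ ≤ ENNReal.ofReal (r ^ 2) * ∑' k : ℕ,
              ENNReal.ofReal ((C₁ * 2 ^ (2 - α) * ρ ^ (-α)) * ((2:ℝ) ^ (-α)) ^ k) :=
            mul_le_mul_right (ENNReal.tsum_le_tsum hDk) _
        _ = ENNReal.ofReal (r ^ 2) * (ENNReal.ofReal (C₁ * 2 ^ (2 - α) * ρ ^ (-α)) *
              ENNReal.ofReal ((1 - 2 ^ (-α))⁻¹)) := by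
            congr 1
            calc ∑' k : ℕ, ENNReal.ofReal ((C₁ * 2 ^ (2 - α) * ρ ^ (-α)) * ((2:ℝ) ^ (-α)) ^ k)
                = ∑' k : ℕ, ENNReal.ofReal (C₁ * 2 ^ (2 - α) * ρ ^ (-α)) *
                    ENNReal.ofReal (((2:ℝ) ^ (-α)) ^ k) :=
                  tsum_congr fun k => ENNReal.ofReal_mul (by positivity)
              _ = ENNReal.ofReal (C₁ * 2 ^ (2 - α) * ρ ^ (-α)) *
                    ∑' k : ℕ, ENNReal.ofReal (((2:ℝ) ^ (-α)) ^ k) := ENNReal.tsum_mul_left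
              _ = ENNReal.ofReal (C₁ * 2 ^ (2 - α) * ρ ^ (-α)) *
                    ENNReal.ofReal ((1 - 2 ^ (-α))⁻¹) := by
                  rw [← ENNReal.ofReal_tsum_of_nonneg (fun k => pow_nonneg hq0.le k)
                    (summable_geometric_of_lt_one hq0.le hq1),
                    tsum_geometric_of_lt_one hq0.le hq1]
        _ = ENNReal.ofReal (r ^ 2 * (C₁ * 2 ^ (2 - α) * ρ ^ (-α) * (1 - 2 ^ (-α))⁻¹)) := by
            rw [← ENNReal.ofReal_mul (by positivity), ← ENNReal.ofReal_mul (by positivity)]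
        _ = ENNReal.ofReal (2 ^ (2 - α) / (1 - 2 ^ (-α)) * C₁ * r ^ (2 - α)) := by
            congr 1
            rw [hρeq]
            have hrr : r ^ 2 * r ^ (-α) = r ^ (2 - α) := by
              rw [← Real.rpow_two, ← Real.rpow_add hr0]
              congr 1
            rw [div_eq_mul_inv]
            linear_combination (C₁ * 2 ^ (2 - α) * (1 - 2 ^ (-α))⁻¹) * hrr
  refine le_trans step1 (le_trans (add_le_add (add_le_add hA hB) hC) ?_)
  rw [← ENNReal.ofReal_add (by positivity) (by positivity),
    ← ENNReal.ofReal_add (by positivity) (by positivity)]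
  refine ENNReal.ofReal_le_ofReal (le_of_eq (by ring))

/-- Condition (U) is equivalent to (U0) ∧ (U1), with the explicit constants:
`C₀ = C₁ = C_U` in one direction and `C_U = (2^{2-α}/(1-2^{-α}) + 1)C₁ + 4C₀`
in the other. -/
theorem stmt_3 {d : ℕ} (ν : Measure (EuclideanSpace ℝ (Fin d))) (α : ℝ)
    (hα : α ∈ Set.Ioo (0 : ℝ) 2) :
    ((∃ C_U > (0 : ℝ), ∀ r : ℝ, 0 < r → r ≤ 1 →
        ∫⁻ z, ENNReal.ofReal ((min r ‖z‖) ^ 2) ∂ν ≤ ENNReal.ofReal (C_U * r ^ (2 - α))) ↔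
      (∃ C₀ > (0 : ℝ), ∃ C₁ > (0 : ℝ),
        (∫⁻ z, ENNReal.ofReal (min (‖z‖ ^ 2) 1) ∂ν ≤ ENNReal.ofReal C₀) ∧
        (∀ r : ℝ, 0 < r → r < 1 →
          ∫⁻ z in ball (0 : EuclideanSpace ℝ (Fin d)) r, ENNReal.ofReal (‖z‖ ^ 2) ∂ν ≤
            ENNReal.ofReal (C₁ * r ^ (2 - α))))) ∧
    (∀ C_U : ℝ, 0 < C_U →
      (∀ r : ℝ, 0 < r → r ≤ 1 →
        ∫⁻ z, ENNReal.ofReal ((min r ‖z‖) ^ 2) ∂ν ≤ ENNReal.ofReal (C_U * r ^ (2 - α))) →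
      ((∫⁻ z, ENNReal.ofReal (min (‖z‖ ^ 2) 1) ∂ν ≤ ENNReal.ofReal C_U) ∧
        (∀ r : ℝ, 0 < r → r < 1 →
          ∫⁻ z in ball (0 : EuclideanSpace ℝ (Fin d)) r, ENNReal.ofReal (‖z‖ ^ 2) ∂ν ≤
            ENNReal.ofReal (C_U * r ^ (2 - α))))) ∧
    (∀ C₀ C₁ : ℝ, 0 < C₀ → 0 < C₁ →
      (∫⁻ z, ENNReal.ofReal (min (‖z‖ ^ 2) 1) ∂ν ≤ ENNReal.ofReal C₀) →
      (∀ r : ℝ, 0 < r → r < 1 →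
        ∫⁻ z in ball (0 : EuclideanSpace ℝ (Fin d)) r, ENNReal.ofReal (‖z‖ ^ 2) ∂ν ≤
          ENNReal.ofReal (C₁ * r ^ (2 - α))) →
      (∀ r : ℝ, 0 < r → r ≤ 1 →
        ∫⁻ z, ENNReal.ofReal ((min r ‖z‖) ^ 2) ∂ν ≤
          ENNReal.ofReal (((2 ^ (2 - α) / (1 - 2 ^ (-α)) + 1) * C₁ + 4 * C₀) *
            r ^ (2 - α)))) := by
  have h2a : (0:ℝ) < 2 ^ (2 - α) := Real.rpow_pos_of_pos two_pos _
  have hq1' : (0:ℝ) < 1 - 2 ^ (-α) := by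
    have := Real.rpow_lt_one_of_one_lt_of_neg one_lt_two (by linarith [hα.1] : -α < 0)
    linarith
  have hdivpos : (0:ℝ) < 2 ^ (2 - α) / (1 - 2 ^ (-α)) := div_pos h2a hq1'
  refine ⟨?_, fun C_U hC hU => dir2 ν α C_U hU,
    fun C₀ C₁ h₀ h₁ hU0 hU1 r hr0 hr1 => dir3 ν α hα C₀ C₁ h₀ h₁ hU0 hU1 r hr0 hr1⟩
  constructor
  · rintro ⟨C, hC, hU⟩
    exact ⟨C, hC, C, hC, dir2 ν α C hU⟩
  · rintro ⟨C₀, h₀, C₁, h₁, hU0, hU1⟩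
    refine ⟨(2 ^ (2 - α) / (1 - 2 ^ (-α)) + 1) * C₁ + 4 * C₀, by nlinarith,
      fun r hr0 hr1 => dir3 ν α hα C₀ C₁ h₀ h₁ hU0 hU1 r hr0 hr1⟩
end

section
/- Let ν^{α₀} be a measure on ℝ^d satisfying condition (U) with exponent α₀ ∈ (0,2) and constant C_U, and for α ∈ [α₀,2) let ν^α(dx) = ((2-α)/(2-α₀)) |x|^{α₀-α} ν^{α₀}(dx). Then ν^α satisfies condition (U) with exponent α and constant 13·C_U/(2-α₀); in particular the constant is independent of α ∈ [α₀, 2). -/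
open MeasureTheory Metric

/-- Lemma 6.6(b): if `ν^{α₀}` satisfies condition (U) with exponent `α₀` and
constant `C_U`, then `ν^α` (defined by the density `((2-α)/(2-α₀))|x|^{α₀-α}`)
satisfies condition (U) with exponent `α` and constant `13 C_U/(2-α₀)`. -/
theorem stmt_7 {d : ℕ} (ν₀ : Measure (EuclideanSpace ℝ (Fin d))) (α₀ α C_U : ℝ)
    (hα₀ : α₀ ∈ Set.Ioo (0 : ℝ) 2) (hα₀α : α₀ ≤ α) (hα : α < 2) (hC : 0 < C_U)
    (hU : ∀ r : ℝ, 0 < r → r ≤ 1 →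
      ∫⁻ z, ENNReal.ofReal ((min r ‖z‖) ^ 2) ∂ν₀ ≤ ENNReal.ofReal (C_U * r ^ (2 - α₀))) :
    ∀ r : ℝ, 0 < r → r ≤ 1 →
      ∫⁻ z, ENNReal.ofReal ((min r ‖z‖) ^ 2)
          ∂(ν₀.withDensity fun x => ENNReal.ofReal ((2 - α) / (2 - α₀) * ‖x‖ ^ (α₀ - α))) ≤
        ENNReal.ofReal (13 * C_U / (2 - α₀) * r ^ (2 - α)) := by
  intro r hr hr1
  obtain ⟨hα₀0, hα₀2⟩ := hα₀
  have h2α : (0:ℝ) < 2 - α := by linarith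
  have h2α₀ : (0:ℝ) < 2 - α₀ := by linarith
  set q : ℝ := 2 + α₀ - α with hq
  have hq0 : (0:ℝ) < q := by simp only [hq]; linarith
  have hqα₀ : α₀ < q := by simp only [hq]; linarith
  have hc0 : (0:ℝ) ≤ (2 - α) / (2 - α₀) := by positivity
  -- tail bound for ν₀
  have htail : ∀ s : ℝ, 0 < s → s ≤ 1 →
      ν₀ {z | s ≤ ‖z‖} ≤ ENNReal.ofReal (C_U * s ^ (-α₀)) := by
    intro s hs hs1
    have hs2 : (0:ℝ) < s ^ 2 := by positivity
    have hkey : ENNReal.ofReal (s ^ 2) * ν₀ {z | s ≤ ‖z‖}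
        ≤ ENNReal.ofReal (s ^ 2) * ENNReal.ofReal (C_U * s ^ (-α₀)) := by
      have hprod : ENNReal.ofReal (s ^ 2) * ENNReal.ofReal (C_U * s ^ (-α₀))
          = ENNReal.ofReal (C_U * s ^ (2 - α₀)) := by
        rw [← ENNReal.ofReal_mul hs2.le]
        congr 1
        have : s ^ (2 - α₀) = s ^ (2:ℕ) * s ^ (-α₀) := by
          rw [← Real.rpow_natCast s 2, ← Real.rpow_add hs]
          norm_num [sub_eq_add_neg]
        rw [this]; ring
      rw [hprod]
      calc ENNReal.ofReal (s ^ 2) * ν₀ {z | s ≤ ‖z‖}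
          = ∫⁻ _ in {z : EuclideanSpace ℝ (Fin d) | s ≤ ‖z‖}, ENNReal.ofReal (s ^ 2) ∂ν₀ := by
            rw [setLIntegral_const]
        _ ≤ ∫⁻ z in {z : EuclideanSpace ℝ (Fin d) | s ≤ ‖z‖},
              ENNReal.ofReal ((min s ‖z‖) ^ 2) ∂ν₀ := by
            refine setLIntegral_mono (by fun_prop) fun z hz => ?_
            rw [Set.mem_setOf_eq] at hz
            rw [min_eq_left hz]
        _ ≤ ∫⁻ z, ENNReal.ofReal ((min s ‖z‖) ^ 2) ∂ν₀ := setLIntegral_le_lintegral _ _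
        _ ≤ ENNReal.ofReal (C_U * s ^ (2 - α₀)) := hU s hs hs1
    exact (ENNReal.mul_le_mul_iff_right (by simp [hs2, hs.ne']) ENNReal.ofReal_ne_top).mp hkey
  -- the integral over the small ball, via the layer cake formula
  have hI : ∫⁻ z in ball (0 : EuclideanSpace ℝ (Fin d)) r, ENNReal.ofReal (‖z‖ ^ q) ∂ν₀
      ≤ ENNReal.ofReal (C_U * r ^ (2 - α) * (q / (2 - α))) := by
    set μ := ν₀.restrict (ball (0 : EuclideanSpace ℝ (Fin d)) r) with hμ
    have hlc : ∫⁻ z in ball (0 : EuclideanSpace ℝ (Fin d)) r, ENNReal.ofReal (‖z‖ ^ q) ∂ν₀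
        = ∫⁻ t in Set.Ioi (0:ℝ), μ {z | t < ‖z‖ ^ q} := by
      exact lintegral_eq_lintegral_meas_lt μ
        (Filter.Eventually.of_forall fun z => Real.rpow_nonneg (norm_nonneg z) q)
        (by fun_prop)
    rw [hlc]
    set T : ℝ := r ^ q with hT
    have hT0 : 0 < T := Real.rpow_pos_of_pos hr q
    set b : ℝ := -α₀ / q with hb
    have hb1 : (-1:ℝ) < b := by
      rw [hb, neg_div, neg_lt_neg_iff, div_lt_one hq0]
      exact hqα₀
    have hbneg : b ≤ 0 := by
      rw [hb, neg_div]
      simp only [neg_nonpos]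
      positivity
    have hb1' : 0 < b + 1 := by linarith
    have hpt : ∀ t ∈ Set.Ioi (0:ℝ), μ {z | t < ‖z‖ ^ q}
        ≤ Set.indicator (Set.Ioo 0 T) (fun t => ENNReal.ofReal (C_U * t ^ b)) t := by
      intro t ht
      rw [Set.mem_Ioi] at ht
      by_cases htT : t < T
      · have htmem : t ∈ Set.Ioo (0:ℝ) T := ⟨ht, htT⟩
        rw [Set.indicator_of_mem htmem]
        set s : ℝ := t ^ q⁻¹ with hs
        have hs0 : 0 < s := Real.rpow_pos_of_pos ht q⁻¹
        have hsr : s < r := by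
          have h1 : t ^ q⁻¹ < (r ^ q) ^ q⁻¹ :=
            Real.rpow_lt_rpow ht.le htT (by positivity)
          rwa [Real.rpow_rpow_inv hr.le hq0.ne'] at h1
        have hsub : {z : EuclideanSpace ℝ (Fin d) | t < ‖z‖ ^ q} ⊆ {z | s ≤ ‖z‖} := by
          intro z hz
          rw [Set.mem_setOf_eq] at hz ⊢
          have h1 : t ^ q⁻¹ ≤ (‖z‖ ^ q) ^ q⁻¹ :=
            Real.rpow_le_rpow ht.le hz.le (by positivity)
          rwa [Real.rpow_rpow_inv (norm_nonneg z) hq0.ne'] at h1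
        calc μ {z | t < ‖z‖ ^ q} ≤ μ {z | s ≤ ‖z‖} := measure_mono hsub
          _ ≤ ν₀ {z | s ≤ ‖z‖} := Measure.restrict_le_self _
          _ ≤ ENNReal.ofReal (C_U * s ^ (-α₀)) := htail s hs0 (hsr.le.trans hr1)
          _ = ENNReal.ofReal (C_U * t ^ b) := by
            congr 1
            rw [hs, ← Real.rpow_mul ht.le, hb]
            congr 1
            field_simp
        -- done
      · rw [Set.indicator_of_notMem (fun h => htT h.2)]
        refine le_of_eq ?_
        have hempty : {z : EuclideanSpace ℝ (Fin d) | t < ‖z‖ ^ q}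
            ∩ ball (0 : EuclideanSpace ℝ (Fin d)) r = ∅ := by
          ext z
          simp only [Set.mem_inter_iff, Set.mem_setOf_eq, mem_ball, dist_zero_right,
            Set.mem_empty_iff_false, iff_false, not_and]
          intro hz hzr
          have : ‖z‖ ^ q < r ^ q := Real.rpow_lt_rpow (norm_nonneg z) hzr hq0
          exact absurd (hz.trans this) (by push_neg at htT; exact not_lt.mpr htT)
        rw [hμ, Measure.restrict_apply' measurableSet_ball, hempty, measure_empty]
    calc ∫⁻ t in Set.Ioi (0:ℝ), μ {z | t < ‖z‖ ^ q}
        ≤ ∫⁻ t in Set.Ioi (0:ℝ),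
            Set.indicator (Set.Ioo 0 T) (fun t => ENNReal.ofReal (C_U * t ^ b)) t :=
          setLIntegral_mono ((by fun_prop : Measurable fun t : ℝ =>
            ENNReal.ofReal (C_U * t ^ b)).indicator measurableSet_Ioo) hpt
      _ = ∫⁻ t in Set.Ioo (0:ℝ) T, ENNReal.ofReal (C_U * t ^ b) := by
          rw [lintegral_indicator measurableSet_Ioo, Measure.restrict_restrict measurableSet_Ioo,
            Set.inter_eq_self_of_subset_left Set.Ioo_subset_Ioi_self]
      _ = ENNReal.ofReal (∫ t in Set.Ioo (0:ℝ) T, C_U * t ^ b) := by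
          rw [← ofReal_integral_eq_lintegral_ofReal]
          · have : IntegrableOn (fun t : ℝ => t ^ b) (Set.Ioo 0 T) := by
              have h1 : IntervalIntegrable (fun t : ℝ => t ^ b) volume 0 T :=
                intervalIntegral.intervalIntegrable_rpow' hb1
              exact ((intervalIntegrable_iff_integrableOn_Ioc_of_le hT0.le).mp h1).mono_set
                Set.Ioo_subset_Ioc_self
            exact this.const_mul C_U
          · filter_upwards [self_mem_ae_restrict measurableSet_Ioo] with t htm
            have : (0:ℝ) < t := htm.1
            positivity
      _ ≤ ENNReal.ofReal (C_U * r ^ (2 - α) * (q / (2 - α))) := by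
          apply ENNReal.ofReal_le_ofReal
          rw [integral_const_mul, ← integral_Ioc_eq_integral_Ioo,
            ← intervalIntegral.integral_of_le hT0.le, integral_rpow (Or.inl hb1)]
          have h0b : (0:ℝ) ^ (b + 1) = 0 := Real.zero_rpow hb1'.ne'
          rw [h0b, sub_zero]
          have hTb : T ^ (b + 1) = r ^ (2 - α) := by
            rw [hT, ← Real.rpow_mul hr.le]
            congr 1
            field_simp [hb]
            have hqb : q * b = -α₀ := by rw [hb]; field_simp
            linarith
          rw [hTb]
          have hb1eq : b + 1 = (2 - α) / q := by
            field_simp [hb, hq]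
            have hqb : q * b = -α₀ := by rw [hb]; field_simp
            linarith
          rw [hb1eq]
          rw [div_div_eq_mul_div, mul_assoc]
          apply le_of_eq
          congr 1
          rw [mul_div_assoc]
  -- rewrite the withDensity integral
  have hmd : Measurable fun x : EuclideanSpace ℝ (Fin d) =>
      ENNReal.ofReal ((2 - α) / (2 - α₀) * ‖x‖ ^ (α₀ - α)) := by fun_prop
  have hmg : Measurable fun z : EuclideanSpace ℝ (Fin d) =>
      ENNReal.ofReal ((min r ‖z‖) ^ 2) := by fun_prop
  rw [lintegral_withDensity_eq_lintegral_mul ν₀ hmd hmg]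
  simp only [Pi.mul_apply]
  have hsplit : ∀ z : EuclideanSpace ℝ (Fin d),
      ENNReal.ofReal ((2 - α) / (2 - α₀) * ‖z‖ ^ (α₀ - α)) *
          ENNReal.ofReal ((min r ‖z‖) ^ 2)
      = ENNReal.ofReal ((2 - α) / (2 - α₀)) *
          (ENNReal.ofReal (‖z‖ ^ (α₀ - α)) * ENNReal.ofReal ((min r ‖z‖) ^ 2)) := by
    intro z
    rw [ENNReal.ofReal_mul hc0, mul_assoc]
  rw [lintegral_congr hsplit, lintegral_const_mul _ (by fun_prop)]
  -- pointwise bound for the inner integrand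
  have hpoint : ∀ z : EuclideanSpace ℝ (Fin d),
      ENNReal.ofReal (‖z‖ ^ (α₀ - α)) * ENNReal.ofReal ((min r ‖z‖) ^ 2)
      ≤ ENNReal.ofReal (r ^ (α₀ - α)) * ENNReal.ofReal ((min r ‖z‖) ^ 2)
        + Set.indicator (ball (0 : EuclideanSpace ℝ (Fin d)) r)
            (fun z => ENNReal.ofReal (‖z‖ ^ q)) z := by
    intro z
    rcases lt_or_ge ‖z‖ r with h | h
    · have hzb : z ∈ ball (0 : EuclideanSpace ℝ (Fin d)) r := by
        rwa [mem_ball, dist_zero_right]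
      rw [Set.indicator_of_mem hzb]
      refine le_add_left ?_
      rw [min_eq_right h.le, ← ENNReal.ofReal_mul (Real.rpow_nonneg (norm_nonneg z) _)]
      apply ENNReal.ofReal_le_ofReal
      rcases eq_or_ne ‖z‖ 0 with h0 | h0
      · rw [h0, Real.zero_rpow hq0.ne']
        nlinarith [Real.rpow_nonneg (le_refl (0:ℝ)) (α₀ - α)]
      · have hz0 : 0 < ‖z‖ := (norm_nonneg z).lt_of_ne' h0
        rw [← Real.rpow_natCast ‖z‖ 2, ← Real.rpow_add hz0]
        apply le_of_eq
        congr 1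
        push_cast
        simp only [hq]
        ring
    · rw [min_eq_left h]
      refine le_add_right ?_
      exact mul_le_mul_left (ENNReal.ofReal_le_ofReal
        (Real.rpow_le_rpow_of_nonpos hr h (by linarith))) _
  -- put everything together
  have hJ : ∫⁻ z, ENNReal.ofReal (‖z‖ ^ (α₀ - α)) * ENNReal.ofReal ((min r ‖z‖) ^ 2) ∂ν₀
      ≤ ENNReal.ofReal (C_U * r ^ (2 - α) + C_U * r ^ (2 - α) * (q / (2 - α))) := by
    calc ∫⁻ z, ENNReal.ofReal (‖z‖ ^ (α₀ - α)) * ENNReal.ofReal ((min r ‖z‖) ^ 2) ∂ν₀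
        ≤ ∫⁻ z, (ENNReal.ofReal (r ^ (α₀ - α)) * ENNReal.ofReal ((min r ‖z‖) ^ 2)
            + Set.indicator (ball (0 : EuclideanSpace ℝ (Fin d)) r)
                (fun z => ENNReal.ofReal (‖z‖ ^ q)) z) ∂ν₀ := lintegral_mono hpoint
      _ = ENNReal.ofReal (r ^ (α₀ - α)) * ∫⁻ z, ENNReal.ofReal ((min r ‖z‖) ^ 2) ∂ν₀
            + ∫⁻ z in ball (0 : EuclideanSpace ℝ (Fin d)) r,
                ENNReal.ofReal (‖z‖ ^ q) ∂ν₀ := by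
          rw [lintegral_add_left (by fun_prop), lintegral_const_mul _ hmg,
            lintegral_indicator measurableSet_ball]
      _ ≤ ENNReal.ofReal (r ^ (α₀ - α)) * ENNReal.ofReal (C_U * r ^ (2 - α₀))
            + ENNReal.ofReal (C_U * r ^ (2 - α) * (q / (2 - α))) :=
          add_le_add (mul_le_mul_right (hU r hr hr1) _) hI
      _ = ENNReal.ofReal (C_U * r ^ (2 - α) + C_U * r ^ (2 - α) * (q / (2 - α))) := by
          rw [← ENNReal.ofReal_mul (Real.rpow_nonneg hr.le _), ← ENNReal.ofReal_add _
            (by positivity)]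
          · congr 1
            have : r ^ (α₀ - α) * r ^ (2 - α₀) = r ^ (2 - α) := by
              rw [← Real.rpow_add hr]
              congr 1
              ring
            nlinarith [this]
          · have : r ^ (α₀ - α) * (C_U * r ^ (2 - α₀)) ≥ 0 := by positivity
            linarith
  calc ENNReal.ofReal ((2 - α) / (2 - α₀)) *
        ∫⁻ z, ENNReal.ofReal (‖z‖ ^ (α₀ - α)) * ENNReal.ofReal ((min r ‖z‖) ^ 2) ∂ν₀
      ≤ ENNReal.ofReal ((2 - α) / (2 - α₀)) *
          ENNReal.ofReal (C_U * r ^ (2 - α) + C_U * r ^ (2 - α) * (q / (2 - α))) :=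
        mul_le_mul_right hJ _
    _ ≤ ENNReal.ofReal (13 * C_U / (2 - α₀) * r ^ (2 - α)) := by
        rw [← ENNReal.ofReal_mul hc0]
        apply ENNReal.ofReal_le_ofReal
        have hrpos : (0:ℝ) < r ^ (2 - α) := Real.rpow_pos_of_pos hr _
        have e1 : (2 - α) / (2 - α₀) * (C_U * r ^ (2 - α) + C_U * r ^ (2 - α) * (q / (2 - α)))
            = C_U * r ^ (2 - α) * ((2 - α) + q) / (2 - α₀) := by
          field_simp
        rw [e1]
        have e2 : 13 * C_U / (2 - α₀) * r ^ (2 - α) = C_U * r ^ (2 - α) * 13 / (2 - α₀) := by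
          ring
        rw [e2]
        gcongr
        simp only [hq]
        linarith
end

section
/- Let ν₁ and ν₂ be measures on ℝ^d, each satisfying the scaling property ∫ f(y) ν_j(dy) = a^{-α} ∫ f(ay) ν_j(dy) for all measurable f ≥ 0 supported in B₁, for the same a > 1 and α ∈ (0,2). Fix λ < 1 ≤ η with η = a^k for some integer k, and define the measure ν₁ ♥ ν₂ by ∫ f d(ν₁ ♥ ν₂) = ∬ (f·1_{B₂})(η(y+z)) g(y,z) ν₁(dy) ν₂(dz), where g(y,z) = (2-α)^{-1} |y+z|^α 1_{A_{|y+z|}}(y) 1_{A_{|y+z|}}(z) and A_r = B_{ηr} \ B_{λr}. Then ν₁ ♥ ν₂ satisfies the same scaling property: ∫ f(y) (ν₁♥ν₂)(dy) = a^{-α} ∫ f(ay) (ν₁♥ν₂)(dy) for all measurable f ≥ 0 supported in B₁. -/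
open MeasureTheory Metric
open scoped ENNReal

/-- The kernel `g_λ^η(y,z) = (2-α)^{-1} |y+z|^α 1_{A_{|y+z|}}(y) 1_{A_{|y+z|}}(z)`,
where `A_r = B(0,ηr) \ B(0,λr)`. -/
noncomputable def heartKernel {d : ℕ} (α lam η : ℝ)
    (y z : EuclideanSpace ℝ (Fin d)) : ℝ :=
  if (lam * ‖y + z‖ ≤ ‖y‖ ∧ ‖y‖ < η * ‖y + z‖) ∧
      (lam * ‖y + z‖ ≤ ‖z‖ ∧ ‖z‖ < η * ‖y + z‖) then
    (2 - α)⁻¹ * ‖y + z‖ ^ α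
  else 0

/-- The integral of `f` against the heart-convolution `ν₁ ♥ ν₂`:
`∬ (f·1_{B₂})(η(y+z)) g_λ^η(y,z) ν₁(dy) ν₂(dz)`. -/
noncomputable def heartLintegral {d : ℕ} (α lam η : ℝ)
    (ν₁ ν₂ : Measure (EuclideanSpace ℝ (Fin d)))
    (f : EuclideanSpace ℝ (Fin d) → ℝ≥0∞) : ℝ≥0∞ :=
  ∫⁻ y, ∫⁻ z,
    (ball (0 : EuclideanSpace ℝ (Fin d)) 2).indicator f (η • (y + z)) *
      ENNReal.ofReal (heartKernel α lam η y z) ∂ν₂ ∂ν₁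

lemma heart_scale_measure {d : ℕ} (ν : Measure (EuclideanSpace ℝ (Fin d))) (α a : ℝ)
    (hS : ∀ f : EuclideanSpace ℝ (Fin d) → ℝ≥0∞, Measurable f →
      (∀ x, x ∉ ball (0 : EuclideanSpace ℝ (Fin d)) 1 → f x = 0) →
      ∫⁻ y, f y ∂ν = ENNReal.ofReal (a ^ (-α)) * ∫⁻ y, f (a • y) ∂ν) :
    ν.restrict (ball 0 1) =
      ENNReal.ofReal (a ^ (-α)) •
        (Measure.map (a • · : EuclideanSpace ℝ (Fin d) → _) ν).restrict (ball 0 1) := by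
  ext s hs
  have hsb : MeasurableSet (s ∩ ball (0 : EuclideanSpace ℝ (Fin d)) 1) :=
    hs.inter measurableSet_ball
  have key := hS ((s ∩ ball 0 1).indicator 1)
    ((measurable_one).indicator hsb)
    (fun x hx => Set.indicator_of_notMem (fun hxs => hx hxs.2) _)
  rw [lintegral_indicator_one hsb] at key
  have h2 : (fun y : EuclideanSpace ℝ (Fin d) =>
      (s ∩ ball 0 1).indicator (1 : EuclideanSpace ℝ (Fin d) → ℝ≥0∞) (a • y)) =
      ((a • · : EuclideanSpace ℝ (Fin d) → _) ⁻¹' (s ∩ ball 0 1)).indicator 1 := by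
    funext y
    by_cases h : a • y ∈ s ∩ ball (0 : EuclideanSpace ℝ (Fin d)) 1
    · rw [Set.indicator_of_mem h, Set.indicator_of_mem (Set.mem_preimage.2 h)]; rfl
    · rw [Set.indicator_of_notMem h,
        Set.indicator_of_notMem (fun hc => h (Set.mem_preimage.1 hc))]
  rw [h2, lintegral_indicator_one ((measurable_const_smul a) hsb)] at key
  rw [Measure.restrict_apply hs, Measure.smul_apply, Measure.restrict_apply hs,
    Measure.map_apply (measurable_const_smul a) (hsb), smul_eq_mul]
  exact key

lemma heart_scale_fun {d : ℕ} (ν : Measure (EuclideanSpace ℝ (Fin d))) (α a : ℝ)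
    (ha : 0 < a)
    (hS : ∀ f : EuclideanSpace ℝ (Fin d) → ℝ≥0∞, Measurable f →
      (∀ x, x ∉ ball (0 : EuclideanSpace ℝ (Fin d)) 1 → f x = 0) →
      ∫⁻ y, f y ∂ν = ENNReal.ofReal (a ^ (-α)) * ∫⁻ y, f (a • y) ∂ν)
    (F : EuclideanSpace ℝ (Fin d) → ℝ≥0∞)
    (hF : ∀ x, x ∉ ball (0 : EuclideanSpace ℝ (Fin d)) 1 → F x = 0) :
    ∫⁻ y, F y ∂ν = ENNReal.ofReal (a ^ (-α)) * ∫⁻ y, F (a • y) ∂ν := by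
  have hFind : (ball (0 : EuclideanSpace ℝ (Fin d)) 1).indicator F = F := by
    funext x
    by_cases hx : x ∈ ball (0 : EuclideanSpace ℝ (Fin d)) 1
    · simp [Set.indicator_of_mem hx]
    · rw [Set.indicator_of_notMem hx, hF x hx]
  have hemb : MeasurableEmbedding (a • · : EuclideanSpace ℝ (Fin d) → _) :=
    measurableEmbedding_const_smul₀ ha.ne'
  calc ∫⁻ y, F y ∂ν
      = ∫⁻ y, (ball (0 : EuclideanSpace ℝ (Fin d)) 1).indicator F y ∂ν := by rw [hFind]
    _ = ∫⁻ y, F y ∂(ν.restrict (ball 0 1)) :=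
        lintegral_indicator measurableSet_ball F
    _ = ∫⁻ y, F y ∂(ENNReal.ofReal (a ^ (-α)) •
          (Measure.map (a • · : EuclideanSpace ℝ (Fin d) → _) ν).restrict (ball 0 1)) := by
        rw [← heart_scale_measure ν α a hS]
    _ = ENNReal.ofReal (a ^ (-α)) * ∫⁻ y, F y
          ∂((Measure.map (a • · : EuclideanSpace ℝ (Fin d) → _) ν).restrict (ball 0 1)) := by
        rw [lintegral_smul_measure, smul_eq_mul]
    _ = ENNReal.ofReal (a ^ (-α)) * ∫⁻ y, F (a • y) ∂ν := by
        rw [← lintegral_indicator measurableSet_ball F, hFind, hemb.lintegral_map]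

lemma heart_vanish {d : ℕ} (α lam η : ℝ) (hη : 1 ≤ η)
    (f : EuclideanSpace ℝ (Fin d) → ℝ≥0∞)
    (hf0 : ∀ x, x ∉ ball (0 : EuclideanSpace ℝ (Fin d)) 1 → f x = 0)
    (y z : EuclideanSpace ℝ (Fin d)) (h : 1 ≤ ‖y‖ ∨ 1 ≤ ‖z‖) :
    (ball (0 : EuclideanSpace ℝ (Fin d)) 2).indicator f (η • (y + z)) *
      ENNReal.ofReal (heartKernel α lam η y z) = 0 := by
  unfold heartKernel
  by_cases hcond : (lam * ‖y + z‖ ≤ ‖y‖ ∧ ‖y‖ < η * ‖y + z‖) ∧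
      (lam * ‖y + z‖ ≤ ‖z‖ ∧ ‖z‖ < η * ‖y + z‖)
  · have hη0 : (0:ℝ) < η := lt_of_lt_of_le one_pos hη
    have hn : ‖η • (y + z)‖ = η * ‖y + z‖ := by
      rw [norm_smul, Real.norm_eq_abs, abs_of_pos hη0]
    have h1 : (1:ℝ) ≤ η * ‖y + z‖ := by
      rcases h with h | h
      · exact (h.trans_lt hcond.1.2).le
      · exact (h.trans_lt hcond.2.2).le
    have hfz : f (η • (y + z)) = 0 :=
      hf0 _ (by rw [mem_ball_zero_iff, hn]; exact not_lt.2 h1)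
    rw [Set.indicator_apply_eq_zero.2 (fun _ => hfz), zero_mul]
  · rw [if_neg hcond, ENNReal.ofReal_zero, mul_zero]

lemma heartKernel_smul {d : ℕ} (α lam η a : ℝ) (ha : 0 < a)
    (y z : EuclideanSpace ℝ (Fin d)) :
    heartKernel α lam η (a • y) (a • z) = a ^ α * heartKernel α lam η y z := by
  unfold heartKernel
  have hs : a • y + a • z = a • (y + z) := (smul_add a y z).symm
  have hn : ∀ w : EuclideanSpace ℝ (Fin d), ‖a • w‖ = a * ‖w‖ := fun w => by
    rw [norm_smul, Real.norm_eq_abs, abs_of_pos ha]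
  rw [hs, hn, hn, hn]
  have c1 : ∀ r s : ℝ, lam * (a * r) ≤ a * s ↔ lam * r ≤ s := fun r s => by
    rw [mul_left_comm]; exact mul_le_mul_iff_right₀ ha
  have c2 : ∀ r s : ℝ, a * s < η * (a * r) ↔ s < η * r := fun r s => by
    rw [mul_left_comm η a]; exact mul_lt_mul_iff_right₀ ha
  rw [if_congr (and_congr (and_congr (c1 _ _) (c2 _ _)) (and_congr (c1 _ _) (c2 _ _))) rfl rfl]
  split_ifs with h
  · rw [Real.mul_rpow ha.le (norm_nonneg _)]; ring
  · rw [mul_zero]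

lemma heart_indicator_shift {d : ℕ} (a : ℝ) (ha : 1 < a)
    (f : EuclideanSpace ℝ (Fin d) → ℝ≥0∞)
    (hf0 : ∀ x, x ∉ ball (0 : EuclideanSpace ℝ (Fin d)) 1 → f x = 0)
    (w : EuclideanSpace ℝ (Fin d)) :
    (ball (0 : EuclideanSpace ℝ (Fin d)) 2).indicator (fun x => f (a • x)) w =
      (ball (0 : EuclideanSpace ℝ (Fin d)) 2).indicator f (a • w) := by
  have ha0 : (0:ℝ) < a := lt_trans one_pos ha
  by_cases hw : w ∈ ball (0 : EuclideanSpace ℝ (Fin d)) 2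
  · rw [Set.indicator_of_mem hw]
    by_cases hw2 : a • w ∈ ball (0 : EuclideanSpace ℝ (Fin d)) 2
    · rw [Set.indicator_of_mem hw2]
    · rw [Set.indicator_of_notMem hw2]
      exact hf0 (a • w) (fun h1 => hw2 (ball_subset_ball (by norm_num) h1))
  · have h2 : a • w ∉ ball (0 : EuclideanSpace ℝ (Fin d)) 2 := fun hc => hw (by
      rw [mem_ball_zero_iff] at hc ⊢
      calc ‖w‖ ≤ a * ‖w‖ := le_mul_of_one_le_left (norm_nonneg w) ha.le
        _ = ‖a • w‖ := by rw [norm_smul, Real.norm_eq_abs, abs_of_pos ha0]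
        _ < 2 := hc)
    rw [Set.indicator_of_notMem hw, Set.indicator_of_notMem h2]

/-- Lemma 6.4: if `ν₁, ν₂` both satisfy the scaling property (S) with ratio `a`
and exponent `α`, and `η = a^k` for some integer `k`, then `ν₁ ♥ ν₂` satisfies
the same scaling property. -/
theorem stmt_14 {d : ℕ} (ν₁ ν₂ : Measure (EuclideanSpace ℝ (Fin d)))
    (α a lam η : ℝ) (hα : α ∈ Set.Ioo (0 : ℝ) 2) (ha : 1 < a)
    (hlam : lam < 1) (hη : 1 ≤ η) (k : ℤ) (hηa : η = a ^ k)
    (hS₁ : ∀ f : EuclideanSpace ℝ (Fin d) → ℝ≥0∞, Measurable f →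
      (∀ x, x ∉ ball (0 : EuclideanSpace ℝ (Fin d)) 1 → f x = 0) →
      ∫⁻ y, f y ∂ν₁ = ENNReal.ofReal (a ^ (-α)) * ∫⁻ y, f (a • y) ∂ν₁)
    (hS₂ : ∀ f : EuclideanSpace ℝ (Fin d) → ℝ≥0∞, Measurable f →
      (∀ x, x ∉ ball (0 : EuclideanSpace ℝ (Fin d)) 1 → f x = 0) →
      ∫⁻ y, f y ∂ν₂ = ENNReal.ofReal (a ^ (-α)) * ∫⁻ y, f (a • y) ∂ν₂) :
    ∀ f : EuclideanSpace ℝ (Fin d) → ℝ≥0∞, Measurable f →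
      (∀ x, x ∉ ball (0 : EuclideanSpace ℝ (Fin d)) 1 → f x = 0) →
      heartLintegral α lam η ν₁ ν₂ f =
        ENNReal.ofReal (a ^ (-α)) *
          heartLintegral α lam η ν₁ ν₂ (fun x => f (a • x)) := by
  intro f hf hf0
  have ha0 : (0:ℝ) < a := lt_trans one_pos ha
  set c : ℝ≥0∞ := ENNReal.ofReal (a ^ (-α)) with hc
  have hcne : c ≠ ⊤ := ENNReal.ofReal_ne_top
  set F : EuclideanSpace ℝ (Fin d) → EuclideanSpace ℝ (Fin d) → ℝ≥0∞ := fun y z =>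
    (ball (0 : EuclideanSpace ℝ (Fin d)) 2).indicator f (η • (y + z)) *
      ENNReal.ofReal (heartKernel α lam η y z) with hFdef
  have vanish : ∀ y z, (1 ≤ ‖y‖ ∨ 1 ≤ ‖z‖) → F y z = 0 := fun y z h =>
    heart_vanish α lam η hη f hf0 y z h
  have hnotmem : ∀ x : EuclideanSpace ℝ (Fin d),
      x ∉ ball (0 : EuclideanSpace ℝ (Fin d)) 1 → 1 ≤ ‖x‖ := fun x hx => by
    rwa [mem_ball_zero_iff, not_lt] at hx
  -- step 1: scale the inner integral
  have step1 : ∀ y, ∫⁻ z, F y z ∂ν₂ = c * ∫⁻ z, F y (a • z) ∂ν₂ := fun y =>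
    heart_scale_fun ν₂ α a ha0 hS₂ (fun z => F y z)
      (fun z hz => vanish y z (Or.inr (hnotmem z hz)))
  -- step 2: scale the outer integral
  have step2 : ∫⁻ y, ∫⁻ z, F y (a • z) ∂ν₂ ∂ν₁ =
      c * ∫⁻ y, ∫⁻ z, F (a • y) (a • z) ∂ν₂ ∂ν₁ :=
    heart_scale_fun ν₁ α a ha0 hS₁ (fun y => ∫⁻ z, F y (a • z) ∂ν₂)
      (fun y hy => by
        show ∫⁻ z, F y (a • z) ∂ν₂ = 0
        rw [lintegral_congr (fun z => vanish y (a • z) (Or.inl (hnotmem y hy))),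
          lintegral_zero])
  -- pointwise identity
  have point : ∀ y z, c * F (a • y) (a • z) =
      (ball (0 : EuclideanSpace ℝ (Fin d)) 2).indicator (fun x => f (a • x)) (η • (y + z)) *
        ENNReal.ofReal (heartKernel α lam η y z) := by
    intro y z
    have hsm : η • (a • y + a • z) = a • (η • (y + z)) := by
      rw [← smul_add, smul_comm]
    have hone : c * ENNReal.ofReal (a ^ α) = 1 := by
      rw [hc, ← ENNReal.ofReal_mul (Real.rpow_nonneg ha0.le _), ← Real.rpow_add ha0,
        neg_add_cancel, Real.rpow_zero, ENNReal.ofReal_one]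
    rw [hFdef]
    simp only []
    rw [heartKernel_smul α lam η a ha0 y z, hsm,
      ← heart_indicator_shift a ha f hf0 (η • (y + z)),
      ENNReal.ofReal_mul (Real.rpow_nonneg ha0.le α)]
    calc c * ((ball (0 : EuclideanSpace ℝ (Fin d)) 2).indicator (fun x => f (a • x))
            (η • (y + z)) * (ENNReal.ofReal (a ^ α) *
            ENNReal.ofReal (heartKernel α lam η y z)))
        = (c * ENNReal.ofReal (a ^ α)) *
            ((ball (0 : EuclideanSpace ℝ (Fin d)) 2).indicator (fun x => f (a • x))
              (η • (y + z)) * ENNReal.ofReal (heartKernel α lam η y z)) := by ring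
      _ = _ := by rw [hone, one_mul]
  -- assemble
  unfold heartLintegral
  calc ∫⁻ y, ∫⁻ z, (ball (0 : EuclideanSpace ℝ (Fin d)) 2).indicator f (η • (y + z)) *
          ENNReal.ofReal (heartKernel α lam η y z) ∂ν₂ ∂ν₁
      = ∫⁻ y, c * ∫⁻ z, F y (a • z) ∂ν₂ ∂ν₁ := lintegral_congr step1
    _ = c * ∫⁻ y, ∫⁻ z, F y (a • z) ∂ν₂ ∂ν₁ := lintegral_const_mul' c _ hcne
    _ = c * (c * ∫⁻ y, ∫⁻ z, F (a • y) (a • z) ∂ν₂ ∂ν₁) := by rw [step2]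
    _ = c * ∫⁻ y, c * ∫⁻ z, F (a • y) (a • z) ∂ν₂ ∂ν₁ := by
        rw [lintegral_const_mul' c _ hcne]
    _ = c * ∫⁻ y, ∫⁻ z, c * F (a • y) (a • z) ∂ν₂ ∂ν₁ := by
        congr 1
        exact lintegral_congr (fun y => (lintegral_const_mul' c _ hcne).symm)
    _ = c * ∫⁻ y, ∫⁻ z,
          (ball (0 : EuclideanSpace ℝ (Fin d)) 2).indicator (fun x => f (a • x))
            (η • (y + z)) * ENNReal.ofReal (heartKernel α lam η y z) ∂ν₂ ∂ν₁ := by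
        congr 1
        exact lintegral_congr (fun y => lintegral_congr (fun z => point y z))
end

section
/- Let b ∈ (0,1), α ∈ (0,2), β = α - 1 + 1/b, and let Γ = {(x₁,x₂) ∈ ℝ² : |x₂| ≥ |x₁|^b or |x₁| ≥ |x₂|^b}. Define k(z) = (2-α)·1_{Γ ∩ B₁}(z)·|z|^{-2-β}. Then for every 0 < r < 1, ∫_{B_r} |z|² k(z) dz ≤ 8 r^{2-α}. -/
open MeasureTheory Metric Set
open scoped ENNReal

lemma oneD (p c r : ℝ) (hp : -1 < p) (hc : 0 ≤ c) (hr : 0 < r) :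
    ∫⁻ x in Set.Ioo (0:ℝ) r, ENNReal.ofReal (c * x ^ p) =
      ENNReal.ofReal (c * (r ^ (p+1) / (p+1))) := by
  have hint : IntegrableOn (fun x : ℝ => c * x ^ p) (Set.Ioo 0 r) := by
    have h1 : IntervalIntegrable (fun x : ℝ => x ^ p) volume 0 r :=
      intervalIntegral.intervalIntegrable_rpow' hp
    have := (h1.const_mul c).1
    exact this.mono_set Set.Ioo_subset_Ioc_self
  have hnn : 0 ≤ᵐ[volume.restrict (Set.Ioo (0:ℝ) r)] fun x : ℝ => c * x ^ p := by
    filter_upwards [ae_restrict_mem measurableSet_Ioo] with x hx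
    exact mul_nonneg hc (Real.rpow_nonneg hx.1.le p)
  rw [← MeasureTheory.ofReal_integral_eq_lintegral_ofReal hint hnn]
  congr 1
  rw [← MeasureTheory.integral_Ioc_eq_integral_Ioo,
    ← intervalIntegral.integral_of_le hr.le, intervalIntegral.integral_const_mul,
    integral_rpow (Or.inl hp), Real.zero_rpow (by linarith), sub_zero]

lemma absInt (q c r : ℝ) (hq : -1 < q) (hc : 0 ≤ c) (hr : 0 < r) :
    ∫⁻ x in Set.Ioo (-r) r, ENNReal.ofReal (c * |x| ^ q) =
      ENNReal.ofReal (2 * (c * (r ^ (q+1) / (q+1)))) := by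
  have hsplit : Set.Ioo (-r) r = Set.Ioo (-r) 0 ∪ Set.Ico 0 r :=
    (Set.Ioo_union_Ico_eq_Ioo (by linarith) hr.le).symm
  have hdisj : Disjoint (Set.Ioo (-r) (0:ℝ)) (Set.Ico 0 r) := by
    rw [Set.disjoint_left]; rintro x ⟨_, h1⟩ ⟨h2, _⟩; linarith
  have hIoo : ∫⁻ x in Set.Ioo (0:ℝ) r, ENNReal.ofReal (c * |x| ^ q) =
      ENNReal.ofReal (c * (r ^ (q+1) / (q+1))) := by
    rw [← oneD q c r hq hc hr]
    refine setLIntegral_congr_fun measurableSet_Ioo (fun x hx => ?_)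
    rw [abs_of_pos hx.1]
  rw [hsplit, lintegral_union measurableSet_Ico hdisj]
  have hneg : ∫⁻ x in Set.Ioo (-r) (0:ℝ), ENNReal.ofReal (c * |x| ^ q) =
      ENNReal.ofReal (c * (r ^ (q+1) / (q+1))) := by
    have hpre : (Neg.neg : ℝ → ℝ) ⁻¹' Set.Ioo (-r) 0 = Set.Ioo 0 r := by
      ext x; simp only [Set.mem_preimage, Set.mem_Ioo]
      constructor <;> rintro ⟨h1, h2⟩ <;> constructor <;> linarith
    have h1 := (Measure.measurePreserving_neg (volume : Measure ℝ)).setLIntegral_comp_preimage_emb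
      (MeasurableEquiv.neg ℝ).measurableEmbedding
      (fun x => ENNReal.ofReal (c * |x| ^ q)) (Set.Ioo (-r) 0)
    rw [← h1, hpre, ← hIoo]
    refine setLIntegral_congr_fun measurableSet_Ioo (fun x hx => ?_)
    simp [abs_neg]
  have hIco : ∫⁻ x in Set.Ico (0:ℝ) r, ENNReal.ofReal (c * |x| ^ q) =
      ENNReal.ofReal (c * (r ^ (q+1) / (q+1))) := by
    rw [← setLIntegral_congr (MeasureTheory.Ioo_ae_eq_Ico (a := (0:ℝ)) (b := r)), hIoo]
  have hv : 0 ≤ c * (r ^ (q+1) / (q+1)) :=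
    mul_nonneg hc (div_nonneg (Real.rpow_nonneg hr.le _) (by linarith))
  rw [hneg, hIco, ← ENNReal.ofReal_add hv hv]
  congr 1; ring

noncomputable def Fk (b α β r x y : ℝ) : ℝ≥0∞ :=
  if |x| < r ∧ |y| ≤ |x| ^ (1/b) then ENNReal.ofReal ((2-α) * |x| ^ (-β)) else 0

lemma Fk_measurable (b α β r : ℝ) : Measurable fun p : ℝ × ℝ => Fk b α β r p.1 p.2 := by
  unfold Fk
  refine Measurable.ite ?_ (by measurability) measurable_const
  exact (measurableSet_lt (measurable_fst.abs) measurable_const).inter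
    (measurableSet_le (measurable_snd.abs) (by measurability))

lemma planar (b α β r : ℝ) (hb : 0 < b) (hb1 : b < 1) (hα0 : 0 < α) (hα2 : α < 2)
    (hβ : β = α - 1 + 1/b) (hr : 0 < r) :
    ∫⁻ p : ℝ × ℝ, Fk b α β r p.1 p.2 ≤ ENNReal.ofReal (4 * r ^ (2-α)) := by
  have h2α : (0:ℝ) ≤ 2 - α := by linarith
  rw [MeasureTheory.Measure.volume_eq_prod, lintegral_prod _ (Fk_measurable b α β r).aemeasurable]
  have inner : ∀ x : ℝ, (∫⁻ y, Fk b α β r x y) ≤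
      (Set.Ioo (-r) r).indicator (fun x => ENNReal.ofReal ((2*(2-α)) * |x| ^ (1-α))) x := by
    intro x
    by_cases hx : |x| < r
    · have hxIoo : x ∈ Set.Ioo (-r) r := by
        rcases abs_lt.1 hx with ⟨h1, h2⟩; exact ⟨h1, h2⟩
      rw [Set.indicator_of_mem hxIoo]
      have hF : ∀ y, Fk b α β r x y = (Set.Icc (-(|x|^(1/b))) (|x|^(1/b))).indicator
          (fun _ => ENNReal.ofReal ((2-α) * |x| ^ (-β))) y := by
        intro y
        unfold Fk
        by_cases hy : |y| ≤ |x|^(1/b)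
        · rw [if_pos ⟨hx, hy⟩, Set.indicator_of_mem]
          rcases abs_le.1 hy with ⟨h1, h2⟩; exact ⟨h1, h2⟩
        · rw [if_neg (by tauto), Set.indicator_of_notMem]
          intro hmem
          exact hy (abs_le.2 ⟨hmem.1, hmem.2⟩)
      simp_rw [hF]
      rw [lintegral_indicator measurableSet_Icc, setLIntegral_const, Real.volume_Icc]
      have harg : (|x|^(1/b) - -(|x|^(1/b))) = 2 * |x|^(1/b) := by ring
      rw [harg, ← ENNReal.ofReal_mul (by positivity)]
      apply ENNReal.ofReal_le_ofReal
      rcases eq_or_ne x 0 with h0 | h0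
      · rw [h0]
        simp only [abs_zero, Real.zero_rpow (one_div_ne_zero hb.ne'), mul_zero]
        positivity
      · have hax : 0 < |x| := abs_pos.2 h0
        rw [show (2-α) * |x|^(-β) * (2*|x|^(1/b)) = 2*(2-α) * (|x|^(-β) * |x|^(1/b)) by ring,
          ← Real.rpow_add hax, show -β + 1/b = 1 - α by rw [hβ]; ring]
    · have hF0 : ∀ y, Fk b α β r x y = 0 := by
        intro y; unfold Fk; rw [if_neg (by tauto)]
      simp only [hF0, lintegral_zero]
      exact zero_le
  calc (∫⁻ x, ∫⁻ y, Fk b α β r x y) ≤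
      ∫⁻ x, (Set.Ioo (-r) r).indicator (fun x => ENNReal.ofReal ((2*(2-α)) * |x| ^ (1-α))) x :=
        lintegral_mono inner
    _ = ∫⁻ x in Set.Ioo (-r) r, ENNReal.ofReal ((2*(2-α)) * |x| ^ (1-α)) := by
        rw [lintegral_indicator measurableSet_Ioo]
    _ = ENNReal.ofReal (2 * ((2*(2-α)) * (r ^ ((1-α)+1) / ((1-α)+1)))) :=
        absInt (1-α) (2*(2-α)) r (by linarith) (by linarith) hr
    _ = ENNReal.ofReal (4 * r ^ (2-α)) := by
        congr 1
        have h1 : (1-α) + 1 = 2 - α := by ring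
        rw [h1]
        have hne : (2:ℝ) - α ≠ 0 := by linarith
        field_simp
        ring

lemma ptwise (b α β r : ℝ) (hb : 0 < b) (hb1 : b < 1) (hα0 : 0 < α) (hα2 : α < 2)
    (hβ : β = α - 1 + 1/b) (hr1 : r < 1)
    (x y n : ℝ) (hn : 0 < n) (hxn : |x| ≤ n) (hnr : n < r)
    (hΓ : |y| ≥ |x| ^ b ∨ |x| ≥ |y| ^ b) (hxy : |y| ≤ |x|) (hx0 : x ≠ 0) :
    ENNReal.ofReal (n ^ 2 * ((2-α) * n ^ (-2-β))) ≤ Fk b α β r x y := by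
  have h1b : 1 < 1/b := one_lt_one_div hb hb1
  have hβ0 : 0 < β := by rw [hβ]; linarith
  have hax : 0 < |x| := abs_pos.2 hx0
  have hx1 : |x| < 1 := by linarith [lt_of_le_of_lt hxn hnr]
  have hyb : |x| ≥ |y| ^ b := by
    rcases hΓ with h | h
    · exfalso
      have h2 : |x| ^ (1:ℝ) < |x| ^ b := Real.rpow_lt_rpow_of_exponent_gt hax hx1 hb1
      rw [Real.rpow_one] at h2
      linarith
    · exact h
  have hy_le : |y| ≤ |x| ^ (1/b) := by
    have h3 : (|y| ^ b) ^ (1/b) ≤ |x| ^ (1/b) :=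
      Real.rpow_le_rpow (Real.rpow_nonneg (abs_nonneg y) b) hyb (by positivity)
    rw [one_div] at h3
    rw [one_div]
    rwa [Real.rpow_rpow_inv (abs_nonneg y) hb.ne'] at h3
  unfold Fk
  rw [if_pos ⟨lt_of_le_of_lt hxn hnr, hy_le⟩]
  apply ENNReal.ofReal_le_ofReal
  have hpow : n ^ 2 * n ^ (-2-β) = n ^ (-β) := by
    rw [← Real.rpow_natCast n 2, ← Real.rpow_add hn]
    congr 1
    push_cast
    ring
  calc n ^ 2 * ((2-α) * n ^ (-2-β)) = (2-α) * (n ^ 2 * n ^ (-2-β)) := by ring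
    _ = (2-α) * n ^ (-β) := by rw [hpow]
    _ ≤ (2-α) * |x| ^ (-β) := by
        refine mul_le_mul_of_nonneg_left ?_ (by linarith)
        exact Real.rpow_le_rpow_of_nonpos hax hxn (by linarith)

/-- Example 6.12 (thorn kernel): with `Γ = {x ∈ ℝ² : |x₂| ≥ |x₁|^b or |x₁| ≥ |x₂|^b}`,
`β = α - 1 + 1/b` and `k(z) = (2-α) 1_{Γ ∩ B₁}(z) |z|^{-2-β}`, one has
`∫_{B_r} |z|² k(z) dz ≤ 8 r^{2-α}` for all `0 < r < 1`. -/
theorem stmt_15 (b α β : ℝ) (hb : b ∈ Set.Ioo (0 : ℝ) 1) (hα : α ∈ Set.Ioo (0 : ℝ) 2)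
    (hβ : β = α - 1 + 1 / b) :
    ∀ r : ℝ, 0 < r → r < 1 →
      ∫⁻ z in ball (0 : EuclideanSpace ℝ (Fin 2)) r,
        ENNReal.ofReal (‖z‖ ^ 2 *
          ({x : EuclideanSpace ℝ (Fin 2) | |x 1| ≥ |x 0| ^ b ∨ |x 0| ≥ |x 1| ^ b} ∩
            ball (0 : EuclideanSpace ℝ (Fin 2)) 1).indicator
              (fun w => (2 - α) * ‖w‖ ^ (-2 - β)) z) ∂volume ≤
        ENNReal.ofReal (8 * r ^ (2 - α)) := by
  obtain ⟨hb0, hb1⟩ := hb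
  obtain ⟨hα0, hα2⟩ := hα
  intro r hr hr1
  have hcoord : ∀ (z : EuclideanSpace ℝ (Fin 2)) (i : Fin 2), |z i| ≤ ‖z‖ := by
    intro z i
    rw [EuclideanSpace.norm_eq]
    refine Real.le_sqrt_of_sq_le ?_
    have : ‖z i‖ ^ 2 ≤ ∑ j, ‖z j‖ ^ 2 :=
      Finset.single_le_sum (f := fun j => ‖z j‖ ^ 2) (fun j _ => sq_nonneg _)
        (Finset.mem_univ i)
    simpa [Real.norm_eq_abs, sq_abs] using this
  have hpt : ∀ z ∈ ball (0 : EuclideanSpace ℝ (Fin 2)) r,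
      ENNReal.ofReal (‖z‖ ^ 2 *
        ({x : EuclideanSpace ℝ (Fin 2) | |x 1| ≥ |x 0| ^ b ∨ |x 0| ≥ |x 1| ^ b} ∩
          ball (0 : EuclideanSpace ℝ (Fin 2)) 1).indicator
            (fun w => (2 - α) * ‖w‖ ^ (-2 - β)) z) ≤
      Fk b α β r (z 0) (z 1) + Fk b α β r (z 1) (z 0) := by
    intro z hz
    by_cases hmem : z ∈ {x : EuclideanSpace ℝ (Fin 2) | |x 1| ≥ |x 0| ^ b ∨ |x 0| ≥ |x 1| ^ b} ∩
        ball (0 : EuclideanSpace ℝ (Fin 2)) 1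
    · rw [Set.indicator_of_mem hmem]
      rcases eq_or_ne z 0 with rfl | hz0
      · simp
      · have hn : 0 < ‖z‖ := norm_pos_iff.2 hz0
        have hnr : ‖z‖ < r := mem_ball_zero_iff.1 hz
        rcases le_total (|z 1|) (|z 0|) with hc | hc
        · have hx0 : z 0 ≠ 0 := by
            intro h
            apply hz0
            have h1 : z 1 = 0 := by
              rw [h] at hc; simpa using hc
            ext i
            fin_cases i <;> simp [h, h1]
          exact le_trans (ptwise b α β r hb0 hb1 hα0 hα2 hβ hr1 (z 0) (z 1) ‖z‖ hn
            (hcoord z 0) hnr hmem.1 hc hx0) le_self_add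
        · have hx0 : z 1 ≠ 0 := by
            intro h
            apply hz0
            have h1 : z 0 = 0 := by
              rw [h] at hc; simpa using hc
            ext i
            fin_cases i <;> simp [h, h1]
          exact le_trans (ptwise b α β r hb0 hb1 hα0 hα2 hβ hr1 (z 1) (z 0) ‖z‖ hn
            (hcoord z 1) hnr hmem.1.symm hc hx0) le_add_self
    · rw [Set.indicator_of_notMem hmem]
      simp
  have hFm : Measurable fun p : ℝ × ℝ => Fk b α β r p.1 p.2 := Fk_measurable b α β r
  have hFm' : Measurable fun p : ℝ × ℝ => Fk b α β r p.2 p.1 :=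
    hFm.comp measurable_swap
  have hgm : Measurable fun p : ℝ × ℝ => Fk b α β r p.1 p.2 + Fk b α β r p.2 p.1 :=
    hFm.add hFm'
  have htransfer : ∫⁻ z : EuclideanSpace ℝ (Fin 2),
      (Fk b α β r (z 0) (z 1) + Fk b α β r (z 1) (z 0)) =
      ∫⁻ p : ℝ × ℝ, (Fk b α β r p.1 p.2 + Fk b α β r p.2 p.1) := by
    have hmp := (volume_preserving_finTwoArrow ℝ).comp
      (EuclideanSpace.volume_preserving_symm_measurableEquiv_toLp (Fin 2))
    exact hmp.lintegral_comp hgm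
  have hswap : ∫⁻ p : ℝ × ℝ, Fk b α β r p.2 p.1 = ∫⁻ p : ℝ × ℝ, Fk b α β r p.1 p.2 := by
    rw [MeasureTheory.Measure.volume_eq_prod]
    exact (Measure.measurePreserving_swap (μ := (volume : Measure ℝ)) (ν := (volume : Measure ℝ))).lintegral_comp hFm
  have hplanar := planar b α β r hb0 hb1 hα0 hα2 hβ hr
  calc ∫⁻ z in ball (0 : EuclideanSpace ℝ (Fin 2)) r,
        ENNReal.ofReal (‖z‖ ^ 2 *
          ({x : EuclideanSpace ℝ (Fin 2) | |x 1| ≥ |x 0| ^ b ∨ |x 0| ≥ |x 1| ^ b} ∩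
            ball (0 : EuclideanSpace ℝ (Fin 2)) 1).indicator
              (fun w => (2 - α) * ‖w‖ ^ (-2 - β)) z) ∂volume
      ≤ ∫⁻ z in ball (0 : EuclideanSpace ℝ (Fin 2)) r,
          (Fk b α β r (z 0) (z 1) + Fk b α β r (z 1) (z 0)) ∂volume :=
        setLIntegral_mono' measurableSet_ball hpt
    _ ≤ ∫⁻ z : EuclideanSpace ℝ (Fin 2),
          (Fk b α β r (z 0) (z 1) + Fk b α β r (z 1) (z 0)) ∂volume :=
        setLIntegral_le_lintegral _ _
    _ = ∫⁻ p : ℝ × ℝ, (Fk b α β r p.1 p.2 + Fk b α β r p.2 p.1) := htransfer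
    _ = (∫⁻ p : ℝ × ℝ, Fk b α β r p.1 p.2) + ∫⁻ p : ℝ × ℝ, Fk b α β r p.2 p.1 :=
        lintegral_add_left hFm _
    _ = (∫⁻ p : ℝ × ℝ, Fk b α β r p.1 p.2) + ∫⁻ p : ℝ × ℝ, Fk b α β r p.1 p.2 := by
        rw [hswap]
    _ ≤ ENNReal.ofReal (4 * r ^ (2-α)) + ENNReal.ofReal (4 * r ^ (2-α)) :=
        add_le_add hplanar hplanar
    _ = ENNReal.ofReal (8 * r ^ (2 - α)) := by
        rw [← ENNReal.ofReal_add (by positivity) (by positivity)]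
        congr 1
        ring
end

section
/- Let ν₁, ν₂ be measures on ℝ^d satisfying condition (U) with exponent α ∈ [α₀, 2) obtained from measures ν_j^{α₀} via ν_j^α(dx) = ((2-α)/(2-α₀))|x|^{α₀-α} ν_j^{α₀}(dx), where each ν_j^{α₀} satisfies ∫(r∧|z|)² ν_j^{α₀}(dz) ≤ C_U r^{2-α₀} for 0 < r ≤ 1. Fix 0 < λ < 1 ≤ η and define ν₁^α ♥ ν₂^α as in the paper. Then ν₁^α ♥ ν₂^α assigns no mass outside B₂, and ν₁^α ♥ ν₂^α(ℝ^d \ B₁) ≤ 8 C_U² η⁴ λ^{-4} (2-α₀)^{-2}. -/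
open MeasureTheory Metric
open scoped ENNReal

/-- The value of the heart-convolution `ν₁ ♥ ν₂` on a set `E`:
`(ν₁ ♥ ν₂)(E) = ∬ 1_{E ∩ B₂}(η(y+z)) g_λ^η(y,z) ν₁(dy) ν₂(dz)`. -/
noncomputable def heartMeasureOf {d : ℕ} (α lam η : ℝ)
    (ν₁ ν₂ : Measure (EuclideanSpace ℝ (Fin d)))
    (E : Set (EuclideanSpace ℝ (Fin d))) : ℝ≥0∞ :=
  ∫⁻ y, ∫⁻ z,
    (E ∩ ball (0 : EuclideanSpace ℝ (Fin d)) 2).indicator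
        (fun _ => (1 : ℝ≥0∞)) (η • (y + z)) *
      ENNReal.ofReal (heartKernel α lam η y z) ∂ν₂ ∂ν₁

lemma tail_est {d : ℕ} (ν : Measure (EuclideanSpace ℝ (Fin d))) (α₀ α C_U r : ℝ)
    (hα₀α : α₀ ≤ α) (hα : α < 2) (hr : 0 < r) (hr1 : r ≤ 1)
    (hU : ∀ r : ℝ, 0 < r → r ≤ 1 →
      ∫⁻ z, ENNReal.ofReal ((min r ‖z‖) ^ 2) ∂ν ≤ ENNReal.ofReal (C_U * r ^ (2 - α₀))) :
    (ν.withDensity fun x => ENNReal.ofReal ((2 - α) / (2 - α₀) * ‖x‖ ^ (α₀ - α)))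
      {x | r ≤ ‖x‖} ≤ ENNReal.ofReal ((2 - α) / (2 - α₀) * C_U * r ^ (-α)) := by
  have hα₀2 : α₀ < 2 := lt_of_le_of_lt hα₀α hα
  have hA : (0:ℝ) < 2 - α := by linarith
  have hB : (0:ℝ) < 2 - α₀ := by linarith
  have hc₁ : (0:ℝ) ≤ (2 - α) / (2 - α₀) := by positivity
  have hc₂ : (0:ℝ) ≤ (2 - α) / (2 - α₀) * r ^ (α₀ - α - 2) := by positivity
  have hS : MeasurableSet {x : EuclideanSpace ℝ (Fin d) | r ≤ ‖x‖} :=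
    (isClosed_le continuous_const continuous_norm).measurableSet
  rw [withDensity_apply _ hS]
  calc ∫⁻ x in {x | r ≤ ‖x‖}, ENNReal.ofReal ((2 - α) / (2 - α₀) * ‖x‖ ^ (α₀ - α)) ∂ν
      ≤ ∫⁻ x in {x | r ≤ ‖x‖},
        ENNReal.ofReal ((2 - α) / (2 - α₀) * r ^ (α₀ - α - 2) * (min r ‖x‖) ^ 2) ∂ν := by
        refine setLIntegral_mono (by fun_prop) ?_
        intro x hx
        simp only [Set.mem_setOf_eq] at hx
        apply ENNReal.ofReal_le_ofReal
        rw [min_eq_left hx]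
        have h1 : ‖x‖ ^ (α₀ - α) ≤ r ^ (α₀ - α) :=
          Real.rpow_le_rpow_of_nonpos hr hx (by linarith)
        have h2 : r ^ (α₀ - α - 2) * r ^ 2 = r ^ (α₀ - α) := by
          rw [← Real.rpow_two, ← Real.rpow_add hr]; ring_nf
        calc (2 - α) / (2 - α₀) * ‖x‖ ^ (α₀ - α) ≤ (2 - α) / (2 - α₀) * r ^ (α₀ - α) :=
              mul_le_mul_of_nonneg_left h1 hc₁
          _ = (2 - α) / (2 - α₀) * r ^ (α₀ - α - 2) * r ^ 2 := by rw [mul_assoc, h2]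
    _ ≤ ∫⁻ x, ENNReal.ofReal ((2 - α) / (2 - α₀) * r ^ (α₀ - α - 2) * (min r ‖x‖) ^ 2) ∂ν :=
        setLIntegral_le_lintegral _ _
    _ = ENNReal.ofReal ((2 - α) / (2 - α₀) * r ^ (α₀ - α - 2)) *
        ∫⁻ x, ENNReal.ofReal ((min r ‖x‖) ^ 2) ∂ν := by
        rw [← lintegral_const_mul' _ _ ENNReal.ofReal_ne_top]
        congr 1 with x
        rw [← ENNReal.ofReal_mul hc₂]
    _ ≤ ENNReal.ofReal ((2 - α) / (2 - α₀) * r ^ (α₀ - α - 2)) *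
        ENNReal.ofReal (C_U * r ^ (2 - α₀)) := mul_le_mul_right (hU r hr hr1) _
    _ = ENNReal.ofReal ((2 - α) / (2 - α₀) * C_U * r ^ (-α)) := by
        rw [← ENNReal.ofReal_mul hc₂]
        congr 1
        have h3 : r ^ (α₀ - α - 2) * r ^ (2 - α₀) = r ^ (-α) := by
          rw [← Real.rpow_add hr]; ring_nf
        calc (2 - α) / (2 - α₀) * r ^ (α₀ - α - 2) * (C_U * r ^ (2 - α₀))
            = (2 - α) / (2 - α₀) * C_U * (r ^ (α₀ - α - 2) * r ^ (2 - α₀)) := by ring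
          _ = (2 - α) / (2 - α₀) * C_U * r ^ (-α) := by rw [h3]

lemma heart_pointwise {d : ℕ} (α lam η : ℝ) (hα0 : 0 < α) (hα : α < 2)
    (hlam : 0 < lam) (hη : 1 ≤ η) (y z : EuclideanSpace ℝ (Fin d)) :
    ((ball (0 : EuclideanSpace ℝ (Fin d)) 1)ᶜ ∩ ball 0 2).indicator
        (fun _ => (1 : ℝ≥0∞)) (η • (y + z)) *
      ENNReal.ofReal (heartKernel α lam η y z) ≤
    ENNReal.ofReal (4 * (2 - α)⁻¹) *
      ({x : EuclideanSpace ℝ (Fin d) | lam / η ≤ ‖x‖}.indicator (fun _ => (1:ℝ≥0∞)) y) *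
      ({x : EuclideanSpace ℝ (Fin d) | lam / η ≤ ‖x‖}.indicator (fun _ => (1:ℝ≥0∞)) z) := by
  have hη0 : (0:ℝ) < η := lt_of_lt_of_le zero_lt_one hη
  by_cases h1 : η • (y + z) ∈ (ball (0 : EuclideanSpace ℝ (Fin d)) 1)ᶜ ∩ ball 0 2
  · by_cases h2 : (lam * ‖y + z‖ ≤ ‖y‖ ∧ ‖y‖ < η * ‖y + z‖) ∧
        (lam * ‖y + z‖ ≤ ‖z‖ ∧ ‖z‖ < η * ‖y + z‖)
    · obtain ⟨h1a, h1b⟩ := id h1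
      rw [Set.mem_compl_iff, mem_ball, dist_zero_right, not_lt] at h1a
      rw [mem_ball, dist_zero_right] at h1b
      rw [norm_smul, Real.norm_eq_abs, abs_of_pos hη0] at h1a h1b
      have hnz : 1 / η ≤ ‖y + z‖ := (div_le_iff₀' hη0).mpr h1a
      have hnz2 : ‖y + z‖ < 2 := lt_of_lt_of_le ((lt_div_iff₀' hη0).mpr h1b)
        (by rw [div_le_iff₀ hη0]; nlinarith)
      have hy : lam / η ≤ ‖y‖ := by
        have h' : lam / η ≤ lam * ‖y + z‖ := by
          rw [div_eq_mul_inv, ← one_div]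
          exact mul_le_mul_of_nonneg_left hnz hlam.le
        linarith [h2.1.1]
      have hz : lam / η ≤ ‖z‖ := by
        have h' : lam / η ≤ lam * ‖y + z‖ := by
          rw [div_eq_mul_inv, ← one_div]
          exact mul_le_mul_of_nonneg_left hnz hlam.le
        linarith [h2.2.1]
      have hy' : y ∈ {x : EuclideanSpace ℝ (Fin d) | lam / η ≤ ‖x‖} := hy
      have hz' : z ∈ {x : EuclideanSpace ℝ (Fin d) | lam / η ≤ ‖x‖} := hz
      rw [Set.indicator_of_mem h1,
        Set.indicator_of_mem hy', Set.indicator_of_mem hz', heartKernel, if_pos h2]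
      rw [one_mul, mul_one, mul_one]
      apply ENNReal.ofReal_le_ofReal
      have h4 : ‖y + z‖ ^ α ≤ 4 := by
        calc ‖y + z‖ ^ α ≤ (2:ℝ) ^ α :=
              Real.rpow_le_rpow (norm_nonneg _) hnz2.le hα0.le
          _ ≤ (2:ℝ) ^ (2:ℝ) := Real.rpow_le_rpow_of_exponent_le one_le_two hα.le
          _ = 4 := by rw [Real.rpow_two]; norm_num
      have hAinv : (0:ℝ) ≤ (2 - α)⁻¹ := inv_nonneg.mpr (by linarith)
      calc (2 - α)⁻¹ * ‖y + z‖ ^ α ≤ (2 - α)⁻¹ * 4 := mul_le_mul_of_nonneg_left h4 hAinv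
        _ = 4 * (2 - α)⁻¹ := by ring
    · rw [heartKernel, if_neg h2, ENNReal.ofReal_zero, mul_zero]
      exact zero_le
  · rw [Set.indicator_of_notMem h1, zero_mul]
    exact zero_le

/-- Tail estimate for the heart-convolution of the rescaled measures
`ν_j^α = ((2-α)/(2-α₀))|x|^{α₀-α} ν_j^{α₀}`: it has no mass outside `B₂`, and
`(ν₁^α ♥ ν₂^α)(ℝ^d \ B₁) ≤ 8 C_U² η⁴ λ^{-4} (2-α₀)^{-2}`. -/
theorem stmt_19 {d : ℕ} (ν₁ ν₂ : Measure (EuclideanSpace ℝ (Fin d)))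
    (α₀ α C_U lam η : ℝ) (hα₀ : α₀ ∈ Set.Ioo (0 : ℝ) 2) (hα₀α : α₀ ≤ α) (hα : α < 2)
    (hC : 0 < C_U) (hlam : 0 < lam) (hlam1 : lam < 1) (hη : 1 ≤ η)
    (hU₁ : ∀ r : ℝ, 0 < r → r ≤ 1 →
      ∫⁻ z, ENNReal.ofReal ((min r ‖z‖) ^ 2) ∂ν₁ ≤ ENNReal.ofReal (C_U * r ^ (2 - α₀)))
    (hU₂ : ∀ r : ℝ, 0 < r → r ≤ 1 →
      ∫⁻ z, ENNReal.ofReal ((min r ‖z‖) ^ 2) ∂ν₂ ≤ ENNReal.ofReal (C_U * r ^ (2 - α₀))) :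
    heartMeasureOf α lam η
        (ν₁.withDensity fun x => ENNReal.ofReal ((2 - α) / (2 - α₀) * ‖x‖ ^ (α₀ - α)))
        (ν₂.withDensity fun x => ENNReal.ofReal ((2 - α) / (2 - α₀) * ‖x‖ ^ (α₀ - α)))
        (ball (0 : EuclideanSpace ℝ (Fin d)) 2)ᶜ = 0 ∧
      heartMeasureOf α lam η
        (ν₁.withDensity fun x => ENNReal.ofReal ((2 - α) / (2 - α₀) * ‖x‖ ^ (α₀ - α)))
        (ν₂.withDensity fun x => ENNReal.ofReal ((2 - α) / (2 - α₀) * ‖x‖ ^ (α₀ - α)))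
        (ball (0 : EuclideanSpace ℝ (Fin d)) 1)ᶜ ≤
      ENNReal.ofReal (8 * C_U ^ 2 * η ^ 4 / (lam ^ 4 * (2 - α₀) ^ 2)) := by
  have hη0 : (0:ℝ) < η := lt_of_lt_of_le zero_lt_one hη
  have hα0 : 0 < α := lt_of_lt_of_le hα₀.1 hα₀α
  have hα₀2 : α₀ < 2 := hα₀.2
  have hA : (0:ℝ) < 2 - α := by linarith
  have hB : (0:ℝ) < 2 - α₀ := by linarith
  constructor
  · simp [heartMeasureOf, Set.compl_inter_self]
  · set ν₁' := ν₁.withDensity fun x => ENNReal.ofReal ((2 - α) / (2 - α₀) * ‖x‖ ^ (α₀ - α))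
    set ν₂' := ν₂.withDensity fun x => ENNReal.ofReal ((2 - α) / (2 - α₀) * ‖x‖ ^ (α₀ - α))
    set S := {x : EuclideanSpace ℝ (Fin d) | lam / η ≤ ‖x‖} with hSdef
    have hS : MeasurableSet S := (isClosed_le continuous_const continuous_norm).measurableSet
    set i := S.indicator (fun _ => (1 : ℝ≥0∞)) with hidef
    set K := ENNReal.ofReal (4 * (2 - α)⁻¹) with hKdef
    have hr : 0 < lam / η := div_pos hlam hη0
    have hr1 : lam / η ≤ 1 := by
      rw [div_le_one hη0]; linarith
    set M := ENNReal.ofReal ((2 - α) / (2 - α₀) * C_U * (lam / η) ^ (-α)) with hMdef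
    have hM₁ : ν₁' S ≤ M := tail_est ν₁ α₀ α C_U (lam / η) hα₀α hα hr hr1 hU₁
    have hM₂ : ν₂' S ≤ M := tail_est ν₂ α₀ α C_U (lam / η) hα₀α hα hr hr1 hU₂
    have hine : ∀ x, i x ≠ ⊤ := by
      intro x
      by_cases h : x ∈ S <;> simp [hidef, Set.indicator, h]
    calc heartMeasureOf α lam η ν₁' ν₂' (ball (0 : EuclideanSpace ℝ (Fin d)) 1)ᶜ
        ≤ ∫⁻ y, ∫⁻ z, K * i y * i z ∂ν₂' ∂ν₁' := by
          refine lintegral_mono fun y => lintegral_mono fun z => ?_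
          exact heart_pointwise α lam η hα0 hα hlam hη y z
      _ = ∫⁻ y, (K * i y) * ν₂' S ∂ν₁' := by
          refine lintegral_congr fun y => ?_
          rw [lintegral_const_mul' _ _
            (ENNReal.mul_ne_top ENNReal.ofReal_ne_top (hine y))]
          congr 1
          exact lintegral_indicator_one hS
      _ = (K * ν₂' S) * ν₁' S := by
          have : ∀ y, (K * i y) * ν₂' S = (K * ν₂' S) * i y := fun y => by ring
          simp_rw [this]
          rw [lintegral_const_mul' _ _
            (ENNReal.mul_ne_top ENNReal.ofReal_ne_top
              (ne_top_of_le_ne_top ENNReal.ofReal_ne_top hM₂))]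
          congr 1
          exact lintegral_indicator_one hS
      _ ≤ (K * M) * M := mul_le_mul' (mul_le_mul' le_rfl hM₂) hM₁
      _ ≤ ENNReal.ofReal (8 * C_U ^ 2 * η ^ 4 / (lam ^ 4 * (2 - α₀) ^ 2)) := by
          set ρ := (lam / η) ^ (-α) with hρdef
          have hρ0 : 0 ≤ ρ := Real.rpow_nonneg hr.le _
          have hc : (0:ℝ) ≤ (2 - α) / (2 - α₀) * C_U * ρ := by positivity
          have h4 : (0:ℝ) ≤ 4 * (2 - α)⁻¹ := by positivity
          rw [hKdef, hMdef, ← ENNReal.ofReal_mul h4, ← ENNReal.ofReal_mul (by positivity)]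
          apply ENNReal.ofReal_le_ofReal
          have hρ : ρ ≤ (η / lam) ^ 2 := by
            have h1 : ρ ≤ (lam / η) ^ (-2 : ℝ) :=
              Real.rpow_le_rpow_of_exponent_ge hr hr1 (by linarith)
            have h2 : (lam / η) ^ (-2 : ℝ) = (η / lam) ^ 2 := by
              rw [Real.rpow_neg hr.le, Real.rpow_two, ← inv_pow, inv_div]
            linarith [h2 ▸ h1]
          have hρ2 : ρ ^ 2 ≤ (η / lam) ^ 4 := by
            calc ρ ^ 2 ≤ ((η / lam) ^ 2) ^ 2 := pow_le_pow_left₀ hρ0 hρ 2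
              _ = (η / lam) ^ 4 := by ring
          have key : 4 * (2 - α)⁻¹ * ((2 - α) / (2 - α₀) * C_U * ρ) *
              ((2 - α) / (2 - α₀) * C_U * ρ) = 4 * (2 - α) * C_U ^ 2 * ρ ^ 2 / (2 - α₀) ^ 2 := by
            field_simp
          rw [key]
          have hnum : 4 * (2 - α) * C_U ^ 2 * ρ ^ 2 ≤ 8 * C_U ^ 2 * (η / lam) ^ 4 := by
            nlinarith [mul_le_mul_of_nonneg_left hρ2 (by positivity : (0:ℝ) ≤ 8 * C_U ^ 2),
              mul_nonneg (sq_nonneg C_U) (sq_nonneg ρ)]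
          have heq : 8 * C_U ^ 2 * (η / lam) ^ 4 / (2 - α₀) ^ 2 =
              8 * C_U ^ 2 * η ^ 4 / (lam ^ 4 * (2 - α₀) ^ 2) := by
            field_simp
          rw [← heq]
          exact div_le_div_of_nonneg_right hnum (by positivity)
end
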